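/- arXiv:1112.0352 — 6 statements merged into one kernel-verified Lean document; each statement's English description precedes it below -/
import Mathlib

section
/- Let A' → A be a small surjection in C with kernel I, and identify Γ_{A',A} with Der ⊗_k I via the isomorphism m(d ⊗ ε)(x) = x + ε·d(x̄). If γ = m(d ⊗ ε) ∈ Γ_{A',A} and γ_g ∈ Γ_{A'} is any element whose coefficientwise reduction modulo m_{A'} equals ρ(g), then γ_g ∘ γ ∘ γ_g^{-1} = m((ρ(g) ∘ d ∘ ρ(g)^{-1}) ⊗ ε); in particular, every element of Γ_{A',k} := ker(Γ_{A'} → Aut_k(k[[t]])) commutes with every element of Γ_{A',A}. -/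
open PowerSeries

section Auxiliary

/-- An artinian module over an artinian local ring that is killed by the maximal ideal
is finitely generated (it is an artinian vector space over the residue field). -/
lemma aux_fin_of_killed {A' k : Type} [CommRing A'] [Field k] [IsLocalRing A']
    [IsArtinianRing A']
    (res : A' →+* k) (hsurj : Function.Surjective res)
    (hker : RingHom.ker res = IsLocalRing.maximalIdeal A')
    (M : Type) [AddCommGroup M] [Module A' M] [IsArtinian A' M]
    (h : ∀ a ∈ IsLocalRing.maximalIdeal A', ∀ x : M, a • x = 0) :
    Module.Finite A' M := by
  classical
  set s : k → A' := Function.surjInv hsurj with hs_def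
  have hs : ∀ c, res (s c) = c := Function.surjInv_eq hsurj
  have key2 : ∀ a b : A', res a = res b → ∀ x : M, a • x = b • x := by
    intro a b hab x
    have hmem : a - b ∈ IsLocalRing.maximalIdeal A' := by
      rw [← hker, RingHom.mem_ker, map_sub, hab, sub_self]
    have := h _ hmem x
    rw [sub_smul, sub_eq_zero] at this
    exact this
  letI : SMul k M := ⟨fun c x => s c • x⟩
  have hsmul : ∀ (c : k) (x : M), c • x = s c • x := fun _ _ => rfl
  letI : Module k M :=
    { one_smul := fun x => by
        rw [hsmul, key2 (s 1) 1 (by rw [hs, map_one]), one_smul]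
      mul_smul := fun c c' x => by
        rw [hsmul, hsmul, hsmul, ← mul_smul,
          key2 (s (c * c')) (s c * s c') (by rw [hs, map_mul, hs, hs])]
      smul_zero := fun c => by rw [hsmul, smul_zero]
      smul_add := fun c x y => by rw [hsmul, hsmul, hsmul, smul_add]
      add_smul := fun c c' x => by
        rw [hsmul, hsmul, hsmul, ← add_smul,
          key2 (s (c + c')) (s c + s c') (by rw [hs, map_add, hs, hs])]
      zero_smul := fun x => by
        rw [hsmul, key2 (s 0) 0 (by rw [hs, map_zero]), zero_smul] }
  -- transfer submodules
  have hsm : ∀ (a : A') (x : M), a • x = (res a) • x := by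
    intro a x
    rw [hsmul]
    exact key2 a (s (res a)) (by rw [hs]) x
  let F : Submodule k M → Submodule A' M := fun W =>
    { toAddSubmonoid := W.toAddSubmonoid
      smul_mem' := fun a x hx => by
        show a • x ∈ W.toAddSubmonoid
        have : a • x ∈ W := by rw [hsm]; exact W.smul_mem _ hx
        exact this }
  have hmemF : ∀ (W : Submodule k M) (x : M), x ∈ F W ↔ x ∈ W := fun _ _ => Iff.rfl
  have hF : ∀ W W', F W ≤ F W' ↔ W ≤ W' := by
    intro W W'
    constructor
    · intro hle x hx
      exact (hmemF W' x).mp (hle ((hmemF W x).mpr hx))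
    · intro hle x hx
      exact (hmemF W' x).mpr (hle ((hmemF W x).mp hx))
  have hFlt : ∀ W W', W < W' → F W < F W' := by
    intro W W' hlt
    rcases lt_iff_le_and_ne.mp hlt with ⟨hle, hne⟩
    refine lt_iff_le_and_ne.mpr ⟨(hF _ _).mpr hle, ?_⟩
    intro hEq
    apply hne
    apply SetLike.ext
    intro x
    constructor
    · intro hx
      exact (hmemF W' x).mp ((SetLike.ext_iff.mp hEq x).mp ((hmemF W x).mpr hx))
    · intro hx
      exact (hmemF W x).mp ((SetLike.ext_iff.mp hEq x).mpr ((hmemF W' x).mpr hx))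
  haveI : IsArtinian k M := by
    rw [isArtinian_iff]
    have hA := (isArtinian_iff A' M).mp inferInstance
    exact Subrelation.wf (fun {W W'} h => hFlt _ _ h) (InvImage.wf F hA)
  haveI : Module.Finite k M := (IsSemisimpleModule.finite_tfae.out 2 0).mp ‹_›
  obtain ⟨T, hT⟩ := Module.Finite.fg_top (R := k) (M := M)
  refine ⟨⟨T, ?_⟩⟩
  rw [eq_top_iff]
  intro x _
  have hx : x ∈ Submodule.span k (T : Set M) := by rw [hT]; trivial
  refine Submodule.span_induction (fun y hy => Submodule.subset_span hy)
    (Submodule.zero_mem _) (fun y z _ _ hy hz => Submodule.add_mem _ hy hz) ?_ hx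
  intro c y _ hy
  rw [hsmul]
  exact Submodule.smul_mem _ _ hy

/-- An ideal of an artinian local ring killed by the maximal ideal is finitely generated. -/
lemma aux_fg_of_killed {A' k : Type} [CommRing A'] [Field k] [IsLocalRing A']
    [IsArtinianRing A']
    (res : A' →+* k) (hsurj : Function.Surjective res)
    (hker : RingHom.ker res = IsLocalRing.maximalIdeal A')
    (J : Ideal A')
    (h : ∀ a ∈ IsLocalRing.maximalIdeal A', ∀ x ∈ J, a * x = 0) : J.FG := by
  haveI : Module.Finite A' J := by
    apply aux_fin_of_killed res hsurj hker
    intro a ha x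
    ext
    exact h a ha x.1 x.2
  exact (Module.Finite.iff_fg).mp ‹_›

/-- The maximal ideal of an artinian local ring is finitely generated. -/
lemma aux_fg_max {A' k : Type} [CommRing A'] [Field k] [IsLocalRing A']
    [IsArtinianRing A']
    (res : A' →+* k) (hsurj : Function.Surjective res)
    (hker : RingHom.ker res = IsLocalRing.maximalIdeal A') :
    (IsLocalRing.maximalIdeal A').FG := by
  classical
  set m : Ideal A' := IsLocalRing.maximalIdeal A' with hm
  set N : Submodule A' (↥m) := m • ⊤ with hN
  haveI : Module.Finite A' (↥m ⧸ N) := by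
    apply aux_fin_of_killed res hsurj hker
    intro a ha x
    obtain ⟨y, rfl⟩ := Submodule.Quotient.mk_surjective N x
    rw [← Submodule.Quotient.mk_smul, Submodule.Quotient.mk_eq_zero]
    exact Submodule.smul_mem_smul ha Submodule.mem_top
  obtain ⟨T, hT⟩ := Module.Finite.fg_top (R := A') (M := ↥m ⧸ N)
  choose lift hlift using Submodule.Quotient.mk_surjective N
  set T' : Finset (↥m) := T.image lift with hT'
  have hmk : Submodule.map N.mkQ (Submodule.span A' (T' : Set ↥m)) = ⊤ := by
    rw [Submodule.map_span, eq_top_iff, ← hT, Submodule.span_le]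
    intro x hx
    apply Submodule.subset_span
    refine ⟨lift x, ?_, ?_⟩
    · exact Finset.mem_coe.mpr (Finset.mem_image_of_mem lift hx)
    · exact hlift x
  have hsup : Submodule.span A' (T' : Set ↥m) ⊔ N = ⊤ := by
    have := congrArg (Submodule.comap N.mkQ) hmk
    rwa [Submodule.comap_map_eq, Submodule.ker_mkQ, Submodule.comap_top] at this
  set S : Set A' := (⇑m.subtype) '' (T' : Set ↥m) with hS
  have hSfin : S.Finite := (T' : Set ↥m).toFinite.image _
  have hpush : Submodule.span A' S ⊔ m • m = m := by
    have := congrArg (Submodule.map m.subtype) hsup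
    rw [hN] at this
    simp only [Submodule.map_sup, Submodule.map_span, Submodule.map_smul'',
      Submodule.map_subtype_top] at this
    exact this
  obtain ⟨n, hn⟩ : IsNilpotent m := by
    rw [hm, ← IsLocalRing.jacobson_eq_maximalIdeal (⊥ : Ideal A') bot_ne_top]
    exact IsArtinianRing.isNilpotent_jacobson_bot
  have key : ∀ j : ℕ, m ≤ Submodule.span A' S ⊔ m ^ j • m := by
    intro j
    induction j with
    | zero => simp
    | succ j ih =>
      refine ih.trans ?_
      apply sup_le le_sup_left
      calc m ^ j • m ≤ m ^ j • (Submodule.span A' S ⊔ m • m) := by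
            rw [hpush]
          _ ≤ Submodule.span A' S ⊔ m ^ (j+1) • m := by
            rw [Submodule.smul_sup]
            apply sup_le (le_sup_left.trans' (Submodule.smul_le_right))
            rw [pow_succ, ← Ideal.smul_eq_mul, Submodule.smul_assoc]
            exact le_sup_right
  refine Submodule.fg_def.mpr ⟨S, hSfin, le_antisymm ?_ ?_⟩
  · rw [← hpush]; exact le_sup_left
  · refine (key n).trans ?_
    rw [hn]
    simp

/-- An `A'`-algebra automorphism of `A'[[t]]` which moves every element by a series with
coefficients in `J'` fixes every series with coefficients in a finitely generated ideal `J`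
annihilating `J'`. -/
lemma aux_fix_of_coeffs {A' : Type} [CommRing A']
    (τ : PowerSeries A' ≃ₐ[A'] PowerSeries A') (J J' : Ideal A') (hJ : J.FG)
    (hτ : ∀ x : PowerSeries A', ∀ n, PowerSeries.coeff n (τ x - x) ∈ J')
    (hz : ∀ a ∈ J, ∀ b ∈ J', a * b = 0)
    (u : PowerSeries A') (hu : ∀ n, PowerSeries.coeff n u ∈ J) : τ u = u := by
  classical
  obtain ⟨s, hs⟩ := hJ
  have hcoef : ∀ n : ℕ, ∃ f : A' → A', ∑ i ∈ s, f i • i = PowerSeries.coeff n u := by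
    intro n
    have hm : PowerSeries.coeff n u ∈ Submodule.span A' (s : Set A') := by
      show PowerSeries.coeff n u ∈ Ideal.span (s : Set A')
      rw [hs]
      exact hu n
    obtain ⟨f, -, hf⟩ := Submodule.mem_span_finset.mp hm
    exact ⟨f, hf⟩
  choose f hf using hcoef
  set v : A' → PowerSeries A' := fun a => PowerSeries.mk (fun n => f n a) with hv
  have hdecomp : u = ∑ a ∈ s, PowerSeries.C a * v a := by
    ext n
    rw [map_sum]
    simp only [hv, PowerSeries.coeff_C_mul, PowerSeries.coeff_mk]
    rw [← hf n]
    apply Finset.sum_congr rfl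
    intro a _
    rw [smul_eq_mul, mul_comm]
  have hterm : ∀ a ∈ s, τ (PowerSeries.C a * v a) = PowerSeries.C a * v a := by
    intro a ha
    have hCa : τ (PowerSeries.C a) = PowerSeries.C a := by
      have : (PowerSeries.C a) = algebraMap A' (PowerSeries A') a := rfl
      rw [this, AlgEquiv.commutes]
    rw [map_mul, hCa]
    have hzero : PowerSeries.C a * (τ (v a) - v a) = 0 := by
      ext n
      rw [PowerSeries.coeff_C_mul, map_zero]
      exact hz a (hs ▸ Submodule.subset_span ha) _ (hτ (v a) n)
    calc PowerSeries.C a * τ (v a)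
        = PowerSeries.C a * v a + PowerSeries.C a * (τ (v a) - v a) := by ring
      _ = PowerSeries.C a * v a := by rw [hzero, add_zero]
  rw [hdecomp, map_sum]
  exact Finset.sum_congr rfl hterm

end Auxiliary

/-- Let `A' → A` be a small surjection in `C` with kernel `I`.  If
`γ ∈ Γ_{A',A}` is the automorphism `m(d ⊗ ε)`, i.e. `γ(x) = x + ε·d(x̄)` (expressed by
quantifying over coefficientwise lifts `y` of `d(x̄)`), and `γ_g ∈ Γ_{A'}` is any element
whose coefficientwise reduction modulo `m_{A'}` equals `ρ(g)`, then
`γ_g ∘ γ ∘ γ_g⁻¹ = m((ρ(g) ∘ d ∘ ρ(g)⁻¹) ⊗ ε)`; in particular every element of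
`Γ_{A',k} = ker(Γ_{A'} → Aut_k(k[[t]]))` commutes with every element of `Γ_{A',A}`. -/
theorem statement1
    (p : ℕ) [Fact p.Prime]
    (k : Type) [Field k] [CharP k p] [PerfectField k]
    (G : Type) [Group G] [Finite G]
    (ρ : G →* (PowerSeries k ≃ₐ[k] PowerSeries k)) (hρ : Function.Injective ρ)
    (A' A : Type) [CommRing A'] [CommRing A]
    [Algebra (WittVector p k) A'] [Algebra (WittVector p k) A]
    [IsLocalRing A'] [IsLocalRing A] [IsArtinianRing A'] [IsArtinianRing A]
    (resA' : A' →+* k) (hres'surj : Function.Surjective resA')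
    (hres'ker : RingHom.ker resA' = IsLocalRing.maximalIdeal A')
    (resA : A →+* k) (hressurj : Function.Surjective resA)
    (hresker : RingHom.ker resA = IsLocalRing.maximalIdeal A)
    (π : A' →+* A) (hπ : Function.Surjective π) (hπres : resA.comp π = resA')
    (hsmall : ∀ a ∈ IsLocalRing.maximalIdeal A', ∀ x ∈ RingHom.ker π, a * x = 0)
    -- the data `d ⊗ ε` and the automorphism `γ = m(d ⊗ ε)`
    (d : Derivation k (PowerSeries k) (PowerSeries k)) (ε : A') (hε : ε ∈ RingHom.ker π)
    (γ : PowerSeries A' ≃ₐ[A'] PowerSeries A')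
    (hγ : ∀ x y : PowerSeries A',
      PowerSeries.map resA' y = d (PowerSeries.map resA' x) →
      γ x = x + PowerSeries.C ε * y)
    -- `γ_g`, an arbitrary lift of `ρ(g)`
    (g : G) (γg : PowerSeries A' ≃ₐ[A'] PowerSeries A')
    (hγg : ∀ x, PowerSeries.map resA' (γg x) = ρ g (PowerSeries.map resA' x)) :
    -- conjugation: `γ_g ∘ γ ∘ γ_g⁻¹ = m((ρ(g) ∘ d ∘ ρ(g)⁻¹) ⊗ ε)`
    (∀ x y : PowerSeries A',
      PowerSeries.map resA' y = ρ g (d (ρ g⁻¹ (PowerSeries.map resA' x))) →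
      γg (γ (γg⁻¹ x)) = x + PowerSeries.C ε * y) ∧
    -- in particular, `Γ_{A',k}` and `Γ_{A',A}` commute element-wise
    (∀ δ σ : PowerSeries A' ≃ₐ[A'] PowerSeries A',
      (∀ x, PowerSeries.map resA' (δ x) = PowerSeries.map resA' x) →
      (∀ x, PowerSeries.map π (σ x) = PowerSeries.map π x) →
      ∀ x, δ (σ x) = σ (δ x)) := by
  constructor
  · -- conjugation formula
    intro x y h
    set x' : PowerSeries A' := γg.symm x with hx'
    set y' : PowerSeries A' := γg.symm y with hy'
    have hgx : γg x' = x := γg.apply_symm_apply x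
    have hgy : γg y' = y := γg.apply_symm_apply y
    have h1 : PowerSeries.map resA' x = ρ g (PowerSeries.map resA' x') := by
      have := hγg x'; rwa [hgx] at this
    have h2 : PowerSeries.map resA' y = ρ g (PowerSeries.map resA' y') := by
      have := hγg y'; rwa [hgy] at this
    have hinv : ρ g⁻¹ (PowerSeries.map resA' x) = PowerSeries.map resA' x' := by
      rw [h1, ← AlgEquiv.mul_apply, ← map_mul, inv_mul_cancel, map_one, AlgEquiv.one_apply]
    have hy'd : PowerSeries.map resA' y' = d (PowerSeries.map resA' x') := by
      apply (ρ g).injective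
      rw [← h2, h, hinv]
    have hγx' : γ x' = x' + PowerSeries.C ε * y' := hγ x' y' hy'd
    have hinvγg : γg⁻¹ x = x' := rfl
    rw [hinvγg, hγx', map_add, hgx]
    congr 1
    calc γg (PowerSeries.C ε * y') = γg (ε • y') := by
          rw [PowerSeries.smul_eq_C_mul]
      _ = ε • γg y' := map_smul γg ε y'
      _ = PowerSeries.C ε * y := by rw [hgy, PowerSeries.smul_eq_C_mul]
  · -- commutation
    intro δ σ hδ hσ x
    have hIfg : (RingHom.ker π).FG :=
      aux_fg_of_killed resA' hres'surj hres'ker _ (fun a ha z hz => hsmall a ha z hz)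
    have hmfg : (IsLocalRing.maximalIdeal A').FG := aux_fg_max resA' hres'surj hres'ker
    have hσc : ∀ z : PowerSeries A', ∀ n,
        PowerSeries.coeff n (σ z - z) ∈ RingHom.ker π := by
      intro z n
      rw [RingHom.mem_ker, ← PowerSeries.coeff_map, map_sub, hσ z, sub_self, map_zero]
    have hδc : ∀ z : PowerSeries A', ∀ n,
        PowerSeries.coeff n (δ z - z) ∈ IsLocalRing.maximalIdeal A' := by
      intro z n
      rw [← hres'ker, RingHom.mem_ker, ← PowerSeries.coeff_map, map_sub, hδ z, sub_self,
        map_zero]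
    have claimB : ∀ u : PowerSeries A',
        (∀ n, PowerSeries.coeff n u ∈ RingHom.ker π) → δ u = u := by
      intro u hu
      exact aux_fix_of_coeffs δ (RingHom.ker π) (IsLocalRing.maximalIdeal A') hIfg hδc
        (fun a ha b hb => by rw [mul_comm]; exact hsmall b hb a ha) u hu
    have claimC : ∀ u : PowerSeries A',
        (∀ n, PowerSeries.coeff n u ∈ IsLocalRing.maximalIdeal A') → σ u = u := by
      intro u hu
      exact aux_fix_of_coeffs σ (IsLocalRing.maximalIdeal A') (RingHom.ker π) hmfg hσc
        hsmall u hu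
    have e1 : δ (σ x) = δ x + (σ x - x) := by
      have h0 := congrArg δ (show σ x = x + (σ x - x) by ring)
      rwa [map_add, claimB _ (hσc x)] at h0
    have e2 : σ (δ x) = σ x + (δ x - x) := by
      have h0 := congrArg σ (show δ x = x + (δ x - x) by ring)
      rwa [map_add, claimC _ (hδc x)] at h0
    rw [e1, e2]
    ring
end

section
/- For a map γ : G → Der define ρ_γ(g) ∈ Aut_{k[ε]}(k[ε][[t]]) by ρ_γ(g)(x₀ + εx₁) = ρ(g)(x₀) + ε(ρ(g)(x₁) + γ_g(ρ(g)(x₀))) for x₀, x₁ ∈ k[[t]]. Then: (a) g ↦ ρ_γ(g) is a lift of ρ to k[ε] if and only if γ is a 1-cocycle, i.e. γ_{gh} = γ_g + g·γ_h for all g, h ∈ G; (b) two 1-cocycles γ, γ' yield equivalent lifts if and only if γ − γ' is a coboundary, i.e. there is δ ∈ Der with γ_g − γ'_g = g·δ − δ for all g; (c) every lift of ρ to k[ε] is equivalent to ρ_γ for some 1-cocycle γ. Hence [γ] ↦ [ρ_γ] is a bijection from H^1(G, Der) onto the set of equivalence classes of lifts of ρ to k[ε]. -/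
open PowerSeries

/-- coefficientwise inclusion `k[[t]] → k[ε][[t]]`. -/
noncomputable def inclEps (k : Type) [Field k] :
    PowerSeries k →+* PowerSeries (DualNumber k) :=
  PowerSeries.map (algebraMap k (DualNumber k))

/-- coefficientwise reduction `k[ε][[t]] → k[[t]]` modulo `(ε)`. -/
noncomputable def redEps (k : Type) [Field k] :
    PowerSeries (DualNumber k) →+* PowerSeries k :=
  PowerSeries.map (TrivSqZeroExt.fstHom k k k).toRingHom

/-- the constant power series `ε ∈ k[ε][[t]]`. -/
noncomputable def epsC (k : Type) [Field k] : PowerSeries (DualNumber k) :=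
  PowerSeries.C (R := DualNumber k) DualNumber.eps

/-- `P : G → Aut_{k[ε]}(k[ε][[t]])` is given by the formula
`ρ_γ(g)(x₀ + εx₁) = ρ(g)(x₀) + ε(ρ(g)(x₁) + γ_g(ρ(g)(x₀)))`. -/
def IsTwistLift {k : Type} [Field k] {G : Type} [Group G]
    (ρ : G →* (PowerSeries k ≃ₐ[k] PowerSeries k))
    (γ : G → Derivation k (PowerSeries k) (PowerSeries k))
    (P : G → (PowerSeries (DualNumber k) ≃ₐ[DualNumber k] PowerSeries (DualNumber k))) :
    Prop :=
  ∀ (g : G) (x₀ x₁ : PowerSeries k),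
    P g (inclEps k x₀ + epsC k * inclEps k x₁) =
      inclEps k (ρ g x₀) + epsC k * inclEps k (ρ g x₁ + γ g (ρ g x₀))

section
variable (k : Type) [Field k]

noncomputable def sndP (y : PowerSeries (DualNumber k)) : PowerSeries k :=
  PowerSeries.mk fun n => (PowerSeries.coeff n y).snd

@[simp] lemma coeff_sndP (n : ℕ) (y : PowerSeries (DualNumber k)) :
    PowerSeries.coeff (R := k) n (sndP k y) = (PowerSeries.coeff n y).snd := by
  simp [sndP]

@[simp] lemma coeff_inclEps (n : ℕ) (x : PowerSeries k) :
    PowerSeries.coeff n (inclEps k x) = TrivSqZeroExt.inl (PowerSeries.coeff (R := k) n x) := by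
  simp [inclEps, TrivSqZeroExt.algebraMap_eq_inl']

@[simp] lemma coeff_redEps (n : ℕ) (y : PowerSeries (DualNumber k)) :
    PowerSeries.coeff (R := k) n (redEps k y) = (PowerSeries.coeff n y).fst := by
  simp [redEps]

@[simp] lemma coeff_eps_mul (n : ℕ) (y : PowerSeries (DualNumber k)) :
    PowerSeries.coeff n (epsC k * y) = DualNumber.eps * PowerSeries.coeff n y := by
  simp [epsC]

lemma decompEps (y : PowerSeries (DualNumber k)) :
    y = inclEps k (redEps k y) + epsC k * inclEps k (sndP k y) := by
  ext n <;>
  simp [TrivSqZeroExt.fst_mul, TrivSqZeroExt.snd_mul]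
end

section
variable (k : Type) [Field k]

@[simp] lemma redEps_inclEps (x : PowerSeries k) : redEps k (inclEps k x) = x := by
  ext n; simp

@[simp] lemma sndP_inclEps (x : PowerSeries k) : sndP k (inclEps k x) = 0 := by
  ext n; simp

@[simp] lemma redEps_epsC : redEps k (epsC k) = 0 := by
  ext n; simp [epsC, PowerSeries.coeff_C, apply_ite]

@[simp] lemma redEps_eps_mul (y : PowerSeries (DualNumber k)) :
    redEps k (epsC k * y) = 0 := by
  rw [map_mul, redEps_epsC, zero_mul]

@[simp] lemma sndP_eps_mul_inclEps (x : PowerSeries k) :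
    sndP k (epsC k * inclEps k x) = x := by
  ext n; simp [TrivSqZeroExt.snd_mul]

@[simp] lemma redEps_iota (x₀ x₁ : PowerSeries k) :
    redEps k (inclEps k x₀ + epsC k * inclEps k x₁) = x₀ := by
  simp

@[simp] lemma sndP_add (y z : PowerSeries (DualNumber k)) :
    sndP k (y + z) = sndP k y + sndP k z := by
  ext n; simp

@[simp] lemma sndP_iota (x₀ x₁ : PowerSeries k) :
    sndP k (inclEps k x₀ + epsC k * inclEps k x₁) = x₁ := by
  simp

lemma iota_inj {x₀ x₁ y₀ y₁ : PowerSeries k}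
    (h : inclEps k x₀ + epsC k * inclEps k x₁ = inclEps k y₀ + epsC k * inclEps k y₁) :
    x₀ = y₀ ∧ x₁ = y₁ := by
  constructor
  · have := congrArg (redEps k) h; simpa using this
  · have := congrArg (sndP k) h; simpa using this

lemma eps_sq : epsC k * epsC k = 0 := by
  rw [epsC, ← map_mul, DualNumber.eps_mul_eps, map_zero]

lemma eps_mul (y : PowerSeries (DualNumber k)) :
    epsC k * y = epsC k * inclEps k (redEps k y) := by
  conv_lhs => rw [decompEps k y]
  rw [mul_add, ← mul_assoc, eps_sq, zero_mul, add_zero]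

lemma iota_mul (a b c d : PowerSeries k) :
    (inclEps k a + epsC k * inclEps k b) * (inclEps k c + epsC k * inclEps k d) =
      inclEps k (a * c) + epsC k * inclEps k (a * d + c * b) := by
  have h : (inclEps k a + epsC k * inclEps k b) * (inclEps k c + epsC k * inclEps k d) =
      inclEps k a * inclEps k c +
        epsC k * (inclEps k a * inclEps k d + inclEps k c * inclEps k b) +
        (epsC k * epsC k) * (inclEps k b * inclEps k d) := by ring
  rw [h, eps_sq, zero_mul, add_zero, ← map_mul, ← map_mul, ← map_mul, ← map_add]

lemma epsC_eq_algebraMap : epsC k =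
    algebraMap (DualNumber k) (PowerSeries (DualNumber k)) DualNumber.eps := rfl

lemma algHom_iota
    (F : PowerSeries (DualNumber k) →ₐ[DualNumber k] PowerSeries (DualNumber k))
    (x₀ x₁ : PowerSeries k) :
    F (inclEps k x₀ + epsC k * inclEps k x₁) =
      inclEps k (redEps k (F (inclEps k x₀))) +
        epsC k * inclEps k (redEps k (F (inclEps k x₁)) + sndP k (F (inclEps k x₀))) := by
  have hc : ∀ y, F (epsC k * y) = epsC k * F y := by
    intro y
    rw [epsC_eq_algebraMap, ← Algebra.smul_def, map_smul, Algebra.smul_def]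
  rw [map_add, hc, eps_mul k (F (inclEps k x₁))]
  conv_lhs => rw [decompEps k (F (inclEps k x₀))]
  rw [map_add, mul_add]
  ring
end

section
variable {k : Type} [Field k]

lemma inclEps_C (a : k) :
    inclEps k (PowerSeries.C (R := k) a) = PowerSeries.C (R := DualNumber k) (TrivSqZeroExt.inl a) := by
  rw [inclEps, PowerSeries.map_C, TrivSqZeroExt.algebraMap_eq_inl']
  simp

lemma C_eq_algebraMap' (c : DualNumber k) :
    PowerSeries.C (R := DualNumber k) c =
      algebraMap (DualNumber k) (PowerSeries (DualNumber k)) c := by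
  rw [PowerSeries.algebraMap_apply]; simp

lemma sndP_C (c : DualNumber k) :
    sndP k (PowerSeries.C (R := DualNumber k) c) = PowerSeries.C (R := k) c.snd := by
  ext n
  rw [coeff_sndP, PowerSeries.coeff_C, PowerSeries.coeff_C]
  split <;> simp

lemma C_powerSeries_eq_algebraMap (a : k) :
    PowerSeries.C (R := k) a = algebraMap k (PowerSeries k) a := by
  rw [PowerSeries.algebraMap_apply]; simp

variable (F : PowerSeries (DualNumber k) →ₐ[DualNumber k] PowerSeries (DualNumber k))
  (σ : PowerSeries k ≃ₐ[k] PowerSeries k)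

lemma F_incl_eq (h : ∀ x, redEps k (F (inclEps k x)) = σ x) (u : PowerSeries k) :
    F (inclEps k u) = inclEps k (σ u) + epsC k * inclEps k (sndP k (F (inclEps k u))) := by
  conv_lhs => rw [decompEps k (F (inclEps k u))]
  rw [h]

lemma F_C_eq (a : k) : F (inclEps k (PowerSeries.C (R := k) a)) = inclEps k (PowerSeries.C (R := k) a) := by
  rw [inclEps_C, C_eq_algebraMap', F.commutes]

lemma sndP_F_C (a : k) : sndP k (F (inclEps k (PowerSeries.C (R := k) a))) = 0 := by
  rw [F_C_eq, sndP_inclEps]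

lemma sndP_F_mul (h : ∀ x, redEps k (F (inclEps k x)) = σ x) (u v : PowerSeries k) :
    sndP k (F (inclEps k (u * v))) =
      σ u * sndP k (F (inclEps k v)) + σ v * sndP k (F (inclEps k u)) := by
  conv_lhs => rw [map_mul, map_mul, F_incl_eq F σ h u, F_incl_eq F σ h v, iota_mul, sndP_iota]

set_option maxHeartbeats 1000000 in
/-- the derivation extracted from `F`. -/
noncomputable def twistDer (h : ∀ x, redEps k (F (inclEps k x)) = σ x) :
    Derivation k (PowerSeries k) (PowerSeries k) where
  toFun x := sndP k (F (inclEps k (σ.symm x)))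
  map_add' x y := by
    show sndP k (F (inclEps k (σ.symm (x + y)))) = _
    rw [map_add, map_add, map_add, sndP_add]
  map_smul' a x := by
    show sndP k (F (inclEps k (σ.symm (a • x)))) = _
    have hC : σ.symm (PowerSeries.C (R := k) a) = PowerSeries.C (R := k) a := by
      rw [C_powerSeries_eq_algebraMap, AlgEquiv.commutes]
    have hC2 : σ (PowerSeries.C (R := k) a) = PowerSeries.C (R := k) a := by
      rw [C_powerSeries_eq_algebraMap, AlgEquiv.commutes]
    simp only [RingHom.id_apply, smul_eq_C_mul]
    rw [map_mul, hC, sndP_F_mul F σ h, sndP_F_C, mul_zero, add_zero, hC2]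
  map_one_eq_zero' := by
    show sndP k (F (inclEps k (σ.symm 1))) = 0
    rw [map_one, map_one, map_one]
    have h1 : (1 : PowerSeries (DualNumber k)) = inclEps k 1 + epsC k * inclEps k 0 := by
      simp
    rw [h1, sndP_iota]
  leibniz' u v := by
    show sndP k (F (inclEps k (σ.symm (u * v)))) = _
    rw [map_mul, sndP_F_mul F σ h, AlgEquiv.apply_symm_apply, AlgEquiv.apply_symm_apply]
    show _ = u * sndP k (F (inclEps k (σ.symm v))) + v * sndP k (F (inclEps k (σ.symm u)))
    ring

@[simp] lemma twistDer_apply (h : ∀ x, redEps k (F (inclEps k x)) = σ x) (x : PowerSeries k) :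
    twistDer F σ h x = sndP k (F (inclEps k (σ.symm x))) := rfl

lemma F_iota (h : ∀ x, redEps k (F (inclEps k x)) = σ x) (x₀ x₁ : PowerSeries k) :
    F (inclEps k x₀ + epsC k * inclEps k x₁) =
      inclEps k (σ x₀) + epsC k * inclEps k (σ x₁ + twistDer F σ h (σ x₀)) := by
  rw [algHom_iota, h, h, twistDer_apply, AlgEquiv.symm_apply_apply]

end

section
variable {k : Type} [Field k]

lemma aut_inv_eq {R A : Type} [CommSemiring R] [Semiring A] [Algebra R A]
    (e : A ≃ₐ[R] A) : e⁻¹ = e.symm := rfl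

lemma redEps_C (c : DualNumber k) :
    redEps k (PowerSeries.C (R := DualNumber k) c) = PowerSeries.C (R := k) c.fst := by
  ext n
  rw [coeff_redEps, PowerSeries.coeff_C, PowerSeries.coeff_C]
  split <;> simp

lemma mul_eps (x w : PowerSeries (DualNumber k)) :
    x * (epsC k * w) = epsC k * inclEps k (redEps k x * redEps k w) := by
  rw [mul_left_comm, eps_mul, map_mul]

lemma der_C (δ : Derivation k (PowerSeries k) (PowerSeries k)) (a : k) :
    δ (PowerSeries.C (R := k) a) = 0 := by
  rw [C_powerSeries_eq_algebraMap, Derivation.map_algebraMap]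

set_option maxHeartbeats 1000000 in
/-- the algebra homomorphism `x₀ + εx₁ ↦ x₀ + ε(x₁ + δ(x₀))`. -/
noncomputable def chiHom (δ : Derivation k (PowerSeries k) (PowerSeries k)) :
    PowerSeries (DualNumber k) →ₐ[DualNumber k] PowerSeries (DualNumber k) where
  toFun y := y + epsC k * inclEps k (δ (redEps k y))
  map_one' := by
    show (1 : PowerSeries (DualNumber k)) + epsC k * inclEps k (δ (redEps k 1)) = 1
    rw [map_one, Derivation.map_one_eq_zero, map_zero, mul_zero, add_zero]
  map_mul' x y := by
    show x * y + epsC k * inclEps k (δ (redEps k (x * y))) = _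
    rw [map_mul, Derivation.leibniz, smul_eq_mul, smul_eq_mul]
    have e4 : (epsC k * inclEps k (δ (redEps k x))) * (epsC k * inclEps k (δ (redEps k y)))
        = 0 := by
      rw [mul_eps, redEps_eps_mul, zero_mul, map_zero, mul_zero]
    have e2 : x * (epsC k * inclEps k (δ (redEps k y)))
        = epsC k * inclEps k (redEps k x * δ (redEps k y)) := by
      rw [mul_eps, redEps_inclEps]
    have e3 : (epsC k * inclEps k (δ (redEps k x))) * y
        = epsC k * inclEps k (redEps k y * δ (redEps k x)) := by
      rw [mul_comm, mul_eps, redEps_inclEps]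
    calc x * y + epsC k * inclEps k (redEps k x * δ (redEps k y)
            + redEps k y * δ (redEps k x))
        = x * y + (epsC k * inclEps k (redEps k x * δ (redEps k y))
            + epsC k * inclEps k (redEps k y * δ (redEps k x)) + 0) := by
          rw [map_add, mul_add]; ring
      _ = (x + epsC k * inclEps k (δ (redEps k x)))
            * (y + epsC k * inclEps k (δ (redEps k y))) := by
          rw [← e2, ← e3, ← e4]; ring
  map_zero' := by
    show (0 : PowerSeries (DualNumber k)) + epsC k * inclEps k (δ (redEps k 0)) = 0
    rw [map_zero, map_zero, map_zero, mul_zero, add_zero]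
  map_add' x y := by
    show x + y + epsC k * inclEps k (δ (redEps k (x + y))) = _
    rw [map_add, map_add, map_add, mul_add]; ring
  commutes' c := by
    show algebraMap _ _ c + epsC k * inclEps k (δ (redEps k (algebraMap _ _ c))) = _
    rw [← C_eq_algebraMap', redEps_C, der_C, map_zero, mul_zero, add_zero]
end

section
variable {k : Type} [Field k]

@[simp] lemma chiHom_apply (δ : Derivation k (PowerSeries k) (PowerSeries k))
    (y : PowerSeries (DualNumber k)) :
    chiHom δ y = y + epsC k * inclEps k (δ (redEps k y)) := rfl

lemma chiHom_inv_comp (δ δ' : Derivation k (PowerSeries k) (PowerSeries k))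
    (hδ : δ' = -δ) (y : PowerSeries (DualNumber k)) :
    chiHom δ (chiHom δ' y) = y := by
  subst hδ
  rw [chiHom_apply, chiHom_apply, map_add (redEps k), redEps_eps_mul, add_zero,
    Derivation.neg_apply, map_neg, mul_neg]
  ring

/-- the algebra automorphism `x₀ + εx₁ ↦ x₀ + ε(x₁ + δ(x₀))`. -/
noncomputable def chi (δ : Derivation k (PowerSeries k) (PowerSeries k)) :
    PowerSeries (DualNumber k) ≃ₐ[DualNumber k] PowerSeries (DualNumber k) :=
  AlgEquiv.ofAlgHom (chiHom δ) (chiHom (-δ))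
    (AlgHom.ext fun y => chiHom_inv_comp δ (-δ) rfl y)
    (AlgHom.ext fun y => chiHom_inv_comp (-δ) δ (neg_neg δ).symm y)

@[simp] lemma chi_apply (δ : Derivation k (PowerSeries k) (PowerSeries k))
    (y : PowerSeries (DualNumber k)) :
    chi δ y = y + epsC k * inclEps k (δ (redEps k y)) := rfl

@[simp] lemma chi_symm_apply (δ : Derivation k (PowerSeries k) (PowerSeries k))
    (y : PowerSeries (DualNumber k)) :
    (chi δ).symm y = y + epsC k * inclEps k (-(δ (redEps k y))) := by
  show chiHom (-δ) y = _
  rw [chiHom_apply, Derivation.neg_apply]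

@[simp] lemma redEps_chi (δ : Derivation k (PowerSeries k) (PowerSeries k))
    (y : PowerSeries (DualNumber k)) :
    redEps k (chi δ y) = redEps k y := by
  rw [chi_apply, map_add, redEps_eps_mul, add_zero]

lemma chi_iota (δ : Derivation k (PowerSeries k) (PowerSeries k)) (x₀ x₁ : PowerSeries k) :
    chi δ (inclEps k x₀ + epsC k * inclEps k x₁) =
      inclEps k x₀ + epsC k * inclEps k (x₁ + δ x₀) := by
  rw [chi_apply, redEps_iota, map_add, mul_add, add_assoc]

lemma chi_symm_iota (δ : Derivation k (PowerSeries k) (PowerSeries k)) (x₀ x₁ : PowerSeries k) :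
    (chi δ).symm (inclEps k x₀ + epsC k * inclEps k x₁) =
      inclEps k x₀ + epsC k * inclEps k (x₁ - δ x₀) := by
  rw [chi_symm_apply, redEps_iota, sub_eq_add_neg, map_add, mul_add, add_assoc]

end


section main
variable {k : Type} [Field k] {G : Type} [Group G]
  (ρ : G →* (PowerSeries k ≃ₐ[k] PowerSeries k))

lemma rho_mul_apply (g h : G) (x : PowerSeries k) : ρ (g * h) x = ρ g (ρ h x) := by
  rw [map_mul, AlgEquiv.mul_apply]

lemma rho_inv_apply (g : G) (x : PowerSeries k) : ρ g⁻¹ (ρ g x) = x := by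
  rw [← AlgEquiv.mul_apply, ← map_mul, inv_mul_cancel, map_one, AlgEquiv.one_apply]

lemma rho_apply_inv (g : G) (x : PowerSeries k) : ρ g (ρ g⁻¹ x) = x := by
  rw [← AlgEquiv.mul_apply, ← map_mul, mul_inv_cancel, map_one, AlgEquiv.one_apply]

lemma rho_symm_eq (g : G) (x : PowerSeries k) : (ρ g).symm x = ρ g⁻¹ x := by
  apply (ρ g).injective
  rw [AlgEquiv.apply_symm_apply, rho_apply_inv]

lemma part_a (γ : G → Derivation k (PowerSeries k) (PowerSeries k))
    (P : G → (PowerSeries (DualNumber k) ≃ₐ[DualNumber k] PowerSeries (DualNumber k)))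
    (hP : IsTwistLift ρ γ P) :
    ((∀ g h x, P (g * h) x = P g (P h x)) ↔
      (∀ g h x, γ (g * h) x = γ g x + ρ g (γ h (ρ g⁻¹ x)))) := by
  constructor
  · intro hm g h x
    set x₀ := (ρ (g * h)).symm x with hx₀
    have hx : ρ (g * h) x₀ = x := AlgEquiv.apply_symm_apply _ _
    have hh : ρ h x₀ = ρ g⁻¹ x := by
      apply (ρ g).injective
      rw [← rho_mul_apply, hx, rho_apply_inv]
    have h1 : P (g * h) (inclEps k x₀ + epsC k * inclEps k 0) =
        P g (P h (inclEps k x₀ + epsC k * inclEps k 0)) := hm g h _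
    rw [hP (g * h) x₀ 0, hP h x₀ 0, hP g (ρ h x₀) (ρ h 0 + γ h (ρ h x₀))] at h1
    have h2 := (iota_inj k h1).2
    simp only [map_zero, zero_add] at h2
    rw [hx, ← rho_mul_apply, hx, hh] at h2
    rw [h2]; ring
  · intro hc g h x
    have hx := decompEps k x
    set x₀ := redEps k x
    set x₁ := sndP k x
    rw [hx, hP (g * h) x₀ x₁, hP h x₀ x₁, hP g (ρ h x₀) (ρ h x₁ + γ h (ρ h x₀))]
    have e1 : ρ (g * h) x₀ = ρ g (ρ h x₀) := rho_mul_apply ρ g h x₀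
    have e2 : ρ (g * h) x₁ = ρ g (ρ h x₁) := rho_mul_apply ρ g h x₁
    have e3 := hc g h (ρ (g * h) x₀)
    rw [e1] at e3 ⊢
    rw [e2]
    rw [show ρ g⁻¹ (ρ g (ρ h x₀)) = ρ h x₀ from rho_inv_apply ρ g _] at e3
    rw [e3]
    simp only [map_add, mul_add]
    ring

lemma chi_iota_hyp (χ : PowerSeries (DualNumber k) ≃ₐ[DualNumber k] PowerSeries (DualNumber k))
    (hred : ∀ x, redEps k (χ x) = redEps k x) (x : PowerSeries k) :
    redEps k (χ.toAlgHom (inclEps k x)) = (AlgEquiv.refl : PowerSeries k ≃ₐ[k] PowerSeries k) x := by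
  show redEps k (χ (inclEps k x)) = _
  rw [hred, redEps_inclEps, AlgEquiv.coe_refl, id_eq]

lemma part_b (γ γ' : G → Derivation k (PowerSeries k) (PowerSeries k))
    (P P' : G → (PowerSeries (DualNumber k) ≃ₐ[DualNumber k] PowerSeries (DualNumber k)))
    (hP : IsTwistLift ρ γ P) (hP' : IsTwistLift ρ γ' P') :
    ((∃ χ : PowerSeries (DualNumber k) ≃ₐ[DualNumber k] PowerSeries (DualNumber k),
        (∀ x, redEps k (χ x) = redEps k x) ∧
        ∀ g x, P g x = χ (P' g (χ⁻¹ x))) ↔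
      (∃ δ : Derivation k (PowerSeries k) (PowerSeries k),
        ∀ g x, γ g x - γ' g x = ρ g (δ (ρ g⁻¹ x)) - δ x)) := by
  constructor
  · rintro ⟨χ, hred, hconj⟩
    have hσ := chi_iota_hyp χ hred
    set D := twistDer χ.toAlgHom AlgEquiv.refl hσ with hDdef
    have hχι : ∀ a b, χ (inclEps k a + epsC k * inclEps k b) =
        inclEps k a + epsC k * inclEps k (b + D a) := by
      intro a b
      have h1 := F_iota χ.toAlgHom AlgEquiv.refl hσ a b
      simpa [hDdef] using h1
    refine ⟨-D, fun g x => ?_⟩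
    set x₀ := ρ g⁻¹ x with hx₀def
    have hxx : ρ g x₀ = x := rho_apply_inv ρ g x
    have hconj' : P g (χ (inclEps k x₀ + epsC k * inclEps k 0)) =
        χ (P' g (inclEps k x₀ + epsC k * inclEps k 0)) := by
      rw [hconj g (χ (inclEps k x₀ + epsC k * inclEps k 0)), aut_inv_eq,
        AlgEquiv.symm_apply_apply]
    rw [hχι x₀ 0, hP g x₀ (0 + D x₀), hP' g x₀ 0, hχι (ρ g x₀) (ρ g 0 + γ' g (ρ g x₀))]
      at hconj'
    have key := (iota_inj k hconj').2
    simp only [map_zero, zero_add] at key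
    rw [hxx] at key
    rw [Derivation.neg_apply, Derivation.neg_apply, map_neg]
    linear_combination key
  · rintro ⟨δ, hδ⟩
    refine ⟨chi (-δ), fun x => redEps_chi _ _, fun g x => ?_⟩
    have hx := decompEps k x
    set x₀ := redEps k x
    set x₁ := sndP k x
    have hδ' := hδ g (ρ g x₀)
    rw [rho_inv_apply] at hδ'
    have hs : ρ g x₁ + γ g (ρ g x₀) =
        ρ g (x₁ - (-δ) x₀) + γ' g (ρ g x₀) + (-δ) (ρ g x₀) := by
      simp only [Derivation.neg_apply, map_sub, map_neg, sub_neg_eq_add, map_add]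
      linear_combination hδ'
    rw [hx, hP g x₀ x₁, aut_inv_eq, chi_symm_iota, hP' g x₀ (x₁ - (-δ) x₀), chi_iota, hs]


lemma part_c (L : G →* (PowerSeries (DualNumber k) ≃ₐ[DualNumber k] PowerSeries (DualNumber k)))
    (hL : ∀ g x, redEps k (L g x) = ρ g (redEps k x)) :
    ∃ (γ : G → Derivation k (PowerSeries k) (PowerSeries k))
      (P : G → (PowerSeries (DualNumber k) ≃ₐ[DualNumber k] PowerSeries (DualNumber k))),
      IsTwistLift ρ γ P ∧
      (∀ g h x, γ (g * h) x = γ g x + ρ g (γ h (ρ g⁻¹ x))) ∧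
      ∃ χ : PowerSeries (DualNumber k) ≃ₐ[DualNumber k] PowerSeries (DualNumber k),
        (∀ x, redEps k (χ x) = redEps k x) ∧
        ∀ g x, L g x = χ (P g (χ⁻¹ x)) := by
  have hσ : ∀ g x, redEps k ((L g).toAlgHom (inclEps k x)) = ρ g x := fun g x => by
    show redEps k (L g (inclEps k x)) = _
    rw [hL, redEps_inclEps]
  refine ⟨fun g => twistDer (L g).toAlgHom (ρ g) (hσ g), fun g => L g, ?_, ?_,
    ⟨AlgEquiv.refl, fun x => rfl, fun g x => ?_⟩⟩
  · intro g x₀ x₁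
    exact F_iota (L g).toAlgHom (ρ g) (hσ g) x₀ x₁
  · intro g h x
    set u := (ρ (g * h)).symm x with hu
    have hx : ρ g (ρ h u) = x := by
      rw [← rho_mul_apply]; exact AlgEquiv.apply_symm_apply _ _
    have hhu : (ρ h).symm (ρ g⁻¹ x) = u := by
      rw [AlgEquiv.symm_apply_eq]
      apply (ρ g).injective
      rw [hx, rho_apply_inv]
    rw [twistDer_apply, twistDer_apply, twistDer_apply, hhu]
    have h1 : (L (g * h)).toAlgHom (inclEps k ((ρ (g * h)).symm x)) =
        L g (L h (inclEps k u)) := by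
      show L (g * h) (inclEps k u) = _
      rw [map_mul, AlgEquiv.mul_apply]
    rw [h1]
    have h2 : L h (inclEps k u) = inclEps k (ρ h u) +
        epsC k * inclEps k (sndP k ((L h).toAlgHom (inclEps k u))) :=
      F_incl_eq (L h).toAlgHom (ρ h) (hσ h) u
    rw [h2]
    have h3 : L g (inclEps k (ρ h u) +
          epsC k * inclEps k (sndP k ((L h).toAlgHom (inclEps k u)))) =
        inclEps k (ρ g (ρ h u)) + epsC k * inclEps k
          (ρ g (sndP k ((L h).toAlgHom (inclEps k u))) +
            twistDer (L g).toAlgHom (ρ g) (hσ g) (ρ g (ρ h u))) :=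
      F_iota (L g).toAlgHom (ρ g) (hσ g) (ρ h u) (sndP k ((L h).toAlgHom (inclEps k u)))
    rw [h3, sndP_iota, hx, twistDer_apply]
    ring
  · simp [aut_inv_eq]

end main


/-- (a) `ρ_γ` is a lift of `ρ` to `k[ε]` iff `γ` is a `1`-cocycle;
(b) two `1`-cocycles yield equivalent lifts iff their difference is a coboundary;
(c) every lift of `ρ` to `k[ε]` is equivalent to some `ρ_γ` with `γ` a `1`-cocycle.
Hence `[γ] ↦ [ρ_γ]` is a bijection from `H¹(G, Der)` onto the set of equivalence
classes of lifts of `ρ` to `k[ε]`. -/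
theorem statement2
    (p : ℕ) [Fact p.Prime]
    (k : Type) [Field k] [CharP k p] [PerfectField k]
    (G : Type) [Group G] [Finite G]
    (ρ : G →* (PowerSeries k ≃ₐ[k] PowerSeries k)) (hρ : Function.Injective ρ) :
    -- (a)
    (∀ (γ : G → Derivation k (PowerSeries k) (PowerSeries k))
       (P : G → (PowerSeries (DualNumber k) ≃ₐ[DualNumber k] PowerSeries (DualNumber k))),
      IsTwistLift ρ γ P →
      ((∀ g h x, P (g * h) x = P g (P h x)) ↔
        (∀ g h x, γ (g * h) x = γ g x + ρ g (γ h (ρ g⁻¹ x))))) ∧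
    -- (b)
    (∀ (γ γ' : G → Derivation k (PowerSeries k) (PowerSeries k))
       (P P' : G → (PowerSeries (DualNumber k) ≃ₐ[DualNumber k] PowerSeries (DualNumber k))),
      IsTwistLift ρ γ P → IsTwistLift ρ γ' P' →
      (∀ g h x, γ (g * h) x = γ g x + ρ g (γ h (ρ g⁻¹ x))) →
      (∀ g h x, γ' (g * h) x = γ' g x + ρ g (γ' h (ρ g⁻¹ x))) →
      ((∃ χ : PowerSeries (DualNumber k) ≃ₐ[DualNumber k] PowerSeries (DualNumber k),
          (∀ x, redEps k (χ x) = redEps k x) ∧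
          ∀ g x, P g x = χ (P' g (χ⁻¹ x))) ↔
        (∃ δ : Derivation k (PowerSeries k) (PowerSeries k),
          ∀ g x, γ g x - γ' g x = ρ g (δ (ρ g⁻¹ x)) - δ x))) ∧
    -- (c)
    (∀ L : G →* (PowerSeries (DualNumber k) ≃ₐ[DualNumber k] PowerSeries (DualNumber k)),
      (∀ g x, redEps k (L g x) = ρ g (redEps k x)) →
      ∃ (γ : G → Derivation k (PowerSeries k) (PowerSeries k))
        (P : G → (PowerSeries (DualNumber k) ≃ₐ[DualNumber k] PowerSeries (DualNumber k))),
        IsTwistLift ρ γ P ∧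
        (∀ g h x, γ (g * h) x = γ g x + ρ g (γ h (ρ g⁻¹ x))) ∧
        ∃ χ : PowerSeries (DualNumber k) ≃ₐ[DualNumber k] PowerSeries (DualNumber k),
          (∀ x, redEps k (χ x) = redEps k x) ∧
          ∀ g x, L g x = χ (P g (χ⁻¹ x))) := by
  exact ⟨fun γ P hP => part_a ρ γ P hP,
    fun γ γ' P P' hP hP' _ _ => part_b ρ γ γ' P P' hP hP',
    fun L hL => part_c ρ L hL⟩
end

section
/- Let A' → A be a small surjection in C with kernel I, and let ρ_A : G → Γ_A be a lift of ρ to A. Then: (a) there exists a set-theoretic map ρ* : G → Γ_{A'} with ρ*(1) = id whose composition with the reduction Γ_{A'} → Γ_A equals ρ_A; (b) for any such ρ*, the function η(g,h) := ρ*(g) ∘ ρ*(h) ∘ ρ*(gh)^{-1} takes values in Γ_{A',A} ≅ Der ⊗_k I and is a 2-cocycle for the G-action on Der ⊗_k I given by conjugation with lifts of ρ(g) (equivalently g·(d ⊗ ε) = (ρ(g) ∘ d ∘ ρ(g)^{-1}) ⊗ ε); (c) the class of η in H^2(G, Der ⊗_k I) does not depend on the choice of ρ*; (d) this class vanishes if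 and only if there exists a group homomorphism ρ_{A'} : G → Γ_{A'} whose reduction to A equals ρ_A. -/
open PowerSeries

namespace ObsAux

variable {R S : Type} [CommRing R] [CommRing S]

/-- Key vanishing: if the constant coefficient of `f` is nilpotent with `c ^ r = 0`,
then low coefficients of `f ^ n * w` vanish for large `n`. -/
theorem coeff_pow_mul_eq_zero {f : R⟦X⟧} {r : ℕ}
    (hr : constantCoeff (R := R) f ^ r = 0) {d n : ℕ} (hdn : d + r ≤ n) (w : R⟦X⟧) :
    coeff (R := R) d (f ^ n * w) = 0 := by
  set c := constantCoeff (R := R) f with hc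
  have hX : (X : R⟦X⟧) ∣ (f - C (R := R) c) := X_dvd_iff.mpr (by simp [hc])
  have hf : f = (f - C (R := R) c) + C (R := R) c := by ring
  rw [hf, add_pow, Finset.sum_mul, map_sum]
  apply Finset.sum_eq_zero
  intro i hi
  simp only [Finset.mem_range] at hi
  rcases le_or_gt r (n - i) with h | h
  · have : c ^ (n - i) = 0 := by
      have : c ^ (n - i) = c ^ r * c ^ (n - i - r) := by
        rw [← pow_add]
        congr 1
        omega
      rw [this, hr, zero_mul]
    have h0 : (C (R := R) c) ^ (n - i) = 0 := by rw [← map_pow, this, map_zero]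
    rw [h0]
    simp
  · have hdi : d < i := by omega
    have : (X : R⟦X⟧) ^ i ∣ (f - C (R := R) c) ^ i * C (R := R) c ^ (n - i) * (n.choose i : R⟦X⟧) * w :=
      dvd_mul_of_dvd_left (dvd_mul_of_dvd_left (dvd_mul_of_dvd_left (pow_dvd_pow_of_dvd hX i) _) _) _
    exact X_pow_dvd_iff.mp this d hdi

/-- Evaluation of the truncation. -/
noncomputable def obsEval (f : R⟦X⟧) (N : ℕ) (x : R⟦X⟧) : R⟦X⟧ :=
  Polynomial.eval₂ (C (R := R)) f (trunc N x)

theorem coeff_eval₂_eq_zero {f : R⟦X⟧} {r : ℕ}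
    (hr : constantCoeff (R := R) f ^ r = 0) {d : ℕ} (P : Polynomial R)
    (hP : ∀ m < d + r, P.coeff m = 0) :
    coeff (R := R) d (Polynomial.eval₂ (C (R := R)) f P) = 0 := by
  rw [Polynomial.eval₂_eq_sum, Polynomial.sum, map_sum]
  apply Finset.sum_eq_zero
  intro e he
  rcases lt_or_ge e (d + r) with h | h
  · rw [hP e h, map_zero, zero_mul, map_zero]
  · rw [mul_comm]
    exact coeff_pow_mul_eq_zero hr h _

theorem coeff_obsEval_stable {f : R⟦X⟧} {r : ℕ}
    (hr : constantCoeff (R := R) f ^ r = 0) {d N N' : ℕ} (h : d + r ≤ N) (h' : N ≤ N') (x : R⟦X⟧) :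
    coeff (R := R) d (obsEval f N' x) = coeff (R := R) d (obsEval f N x) := by
  have key : obsEval f N' x = obsEval f N x
      + Polynomial.eval₂ (C (R := R)) f (trunc N' x - trunc N x) := by
    unfold obsEval
    rw [← Polynomial.eval₂_add, add_sub_cancel]
  rw [key, map_add, coeff_eval₂_eq_zero hr _ (fun m hm => ?_), add_zero]
  rw [Polynomial.coeff_sub, coeff_trunc, coeff_trunc, if_pos (by omega), if_pos (by omega),
    sub_self]

/-- Substitution of `f` (whose constant coefficient is nilpotent of exponent `r`). -/
noncomputable def obsSubst (f : R⟦X⟧) (r : ℕ) (x : R⟦X⟧) : R⟦X⟧ :=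
  PowerSeries.mk fun d => coeff (R := R) d (obsEval f (d + r + 2) x)

theorem coeff_obsSubst_eq {f : R⟦X⟧} {r : ℕ}
    (hr : constantCoeff (R := R) f ^ r = 0) {d N : ℕ} (h : d + r ≤ N) (x : R⟦X⟧) :
    coeff (R := R) d (obsSubst f r x) = coeff (R := R) d (obsEval f N x) := by
  rw [obsSubst, coeff_mk,
    coeff_obsEval_stable hr (le_refl (d + r)) (Nat.le_add_right (d + r) 2) x,
    coeff_obsEval_stable hr (le_refl (d + r)) h x]

theorem obsSubst_C {f : R⟦X⟧} {r : ℕ} (hr : constantCoeff (R := R) f ^ r = 0) (a : R) :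
    obsSubst f r (C (R := R) a) = C (R := R) a := by
  ext d
  rw [coeff_obsSubst_eq hr (show d + r ≤ d + r + 1 by omega), obsEval, trunc_C,
    Polynomial.eval₂_C]

theorem obsSubst_one {f : R⟦X⟧} {r : ℕ} (hr : constantCoeff (R := R) f ^ r = 0) :
    obsSubst f r 1 = 1 := by
  have := obsSubst_C hr 1
  simpa using this

theorem obsSubst_X {f : R⟦X⟧} {r : ℕ} (hr : constantCoeff (R := R) f ^ r = 0) :
    obsSubst f r X = f := by
  ext d
  rw [coeff_obsSubst_eq hr (show d + r ≤ d + r + 2 by omega), obsEval, trunc_X,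
    Polynomial.eval₂_X]

theorem obsSubst_add {f : R⟦X⟧} {r : ℕ} (hr : constantCoeff (R := R) f ^ r = 0) (x y : R⟦X⟧) :
    obsSubst f r (x + y) = obsSubst f r x + obsSubst f r y := by
  ext d
  rw [map_add, coeff_obsSubst_eq hr (le_refl (d + r)) (x + y),
    coeff_obsSubst_eq hr (le_refl (d + r)) x, coeff_obsSubst_eq hr (le_refl (d + r)) y,
    obsEval, obsEval, obsEval, map_add, Polynomial.eval₂_add, map_add]

theorem obsSubst_mul {f : R⟦X⟧} {r : ℕ} (hr : constantCoeff (R := R) f ^ r = 0) (x y : R⟦X⟧) :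
    obsSubst f r (x * y) = obsSubst f r x * obsSubst f r y := by
  ext d
  set N := d + r + 2 with hN
  have hdrN : d + r ≤ N := by omega
  -- left side
  have hL : coeff (R := R) d (obsSubst f r (x * y))
      = coeff (R := R) d (Polynomial.eval₂ (C (R := R)) f (trunc N x * trunc N y)) := by
    rw [coeff_obsSubst_eq hr hdrN (x * y)]
    have key : Polynomial.eval₂ (C (R := R)) f (trunc N x * trunc N y)
        = obsEval f N (x * y)
          + Polynomial.eval₂ (C (R := R)) f (trunc N x * trunc N y - trunc N (x * y)) := by
      unfold obsEval
      rw [← Polynomial.eval₂_add, add_sub_cancel]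
    rw [key, map_add, coeff_eval₂_eq_zero hr _ (fun m hm => ?_), add_zero]
    have hm' : m < N := by omega
    have h1 : (trunc N x * trunc N y).coeff m = (trunc N (x * y)).coeff m := by
      have e1 : (trunc N (↑(trunc N x) * ↑(trunc N y) : R⟦X⟧)).coeff m
          = (trunc N (x * y)).coeff m := by rw [trunc_trunc_mul_trunc]
      rw [coeff_trunc, coeff_trunc, if_pos hm', if_pos hm'] at e1
      calc (trunc N x * trunc N y).coeff m
          = coeff (R := R) m ((↑(trunc N x) * ↑(trunc N y) : R⟦X⟧)) := by
            rw [← Polynomial.coeff_coe, Polynomial.coe_mul]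
        _ = coeff (R := R) m (x * y) := e1
        _ = (trunc N (x * y)).coeff m := by rw [coeff_trunc, if_pos hm']
    rw [Polynomial.coeff_sub, h1, sub_self]
  rw [hL, Polynomial.eval₂_mul, coeff_mul, coeff_mul]
  apply Finset.sum_congr rfl
  intro ij hij
  rw [Finset.HasAntidiagonal.mem_antidiagonal] at hij
  rw [coeff_obsSubst_eq hr (show ij.1 + r ≤ N by omega) x,
    coeff_obsSubst_eq hr (show ij.2 + r ≤ N by omega) y]
  rfl

/-- `obsSubst` bundled as a ring homomorphism. -/
noncomputable def obsSubstHom (f : R⟦X⟧) (r : ℕ) (hr : constantCoeff (R := R) f ^ r = 0) :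
    R⟦X⟧ →+* R⟦X⟧ where
  toFun := obsSubst f r
  map_one' := obsSubst_one hr
  map_mul' := obsSubst_mul hr
  map_zero' := by
    have := obsSubst_C hr 0
    simpa using this
  map_add' := obsSubst_add hr

theorem trunc_map (π : R →+* S) (N : ℕ) (x : R⟦X⟧) :
    (trunc N x).map π = trunc N (PowerSeries.map π x) := by
  apply Polynomial.ext
  intro m
  rw [Polynomial.coeff_map, coeff_trunc, coeff_trunc]
  split_ifs with hm
  · rw [PowerSeries.coeff_map]
  · rw [map_zero]

/-- compatibility of `obsSubst` with coefficientwise maps. -/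
theorem obsSubst_map (π : R →+* S) (f : R⟦X⟧) (r : ℕ) (x : R⟦X⟧) :
    PowerSeries.map π (obsSubst f r x)
      = obsSubst (PowerSeries.map π f) r (PowerSeries.map π x) := by
  have hcomp : (PowerSeries.map π).comp (C (R := R)) = (C (R := S)).comp π :=
    RingHom.ext fun a => by simp [PowerSeries.map_C]
  ext d
  rw [PowerSeries.coeff_map, obsSubst, obsSubst, coeff_mk, coeff_mk, obsEval, obsEval,
    ← PowerSeries.coeff_map, Polynomial.hom_eval₂, ← trunc_map, Polynomial.eval₂_map, hcomp]

theorem endo_coe_poly (σ : R⟦X⟧ →+* R⟦X⟧) (hC : ∀ a, σ (C (R := R) a) = C (R := R) a) (P : Polynomial R) :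
    σ (↑P : R⟦X⟧) = Polynomial.eval₂ (C (R := R)) (σ X) P := by
  induction P using Polynomial.induction_on' with
  | add p q hp hq => rw [Polynomial.coe_add, map_add, hp, hq, Polynomial.eval₂_add]
  | monomial n a =>
      have hm : ((Polynomial.monomial n a : Polynomial R) : R⟦X⟧) = C (R := R) a * X ^ n := by
        rw [Polynomial.coe_monomial, X_pow_eq]
        ext m
        simp [coeff_monomial]
      rw [hm, map_mul, map_pow, hC, Polynomial.eval₂_monomial]

/-- Every `C`-fixing ring endomorphism of `R⟦X⟧` whose value at `X` has nilpotent constant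
coefficient is a substitution. -/
theorem endo_eq_obsSubst (σ : R⟦X⟧ →+* R⟦X⟧) (hC : ∀ a, σ (C (R := R) a) = C (R := R) a)
    {r : ℕ} (hr : constantCoeff (R := R) (σ X) ^ r = 0) (x : R⟦X⟧) :
    σ x = obsSubst (σ X) r x := by
  ext d
  set N := d + r + 2 with hN
  have hdvd : (X : R⟦X⟧) ^ N ∣ (x - ↑(trunc N x)) := by
    rw [X_pow_dvd_iff]
    intro m hm
    rw [map_sub, Polynomial.coeff_coe, coeff_trunc, if_pos hm, sub_self]
  obtain ⟨y, hy⟩ := hdvd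
  have hx : x = (↑(trunc N x) : R⟦X⟧) + X ^ N * y := by
    rw [← hy]; ring
  have expand : σ x = Polynomial.eval₂ (C (R := R)) (σ X) (trunc N x) + (σ X) ^ N * σ y := by
    conv_lhs => rw [hx]
    rw [map_add, map_mul, map_pow, endo_coe_poly σ hC]
  rw [expand, map_add, coeff_pow_mul_eq_zero hr (show d + r ≤ N by omega) (σ y), add_zero,
    coeff_obsSubst_eq hr (show d + r ≤ N by omega) x]
  rfl

section SquareZero

variable {A' A : Type} [CommRing A'] [CommRing A] (π : A' →+* A)

/-- finite generation data for the kernel of `π`. -/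
def KerFG : Prop :=
  ∃ (n : ℕ) (a : Fin n → A'), (∀ j, π (a j) = 0) ∧
    ∀ x, π x = 0 → ∃ c : Fin n → A', x = ∑ j, c j * a j

/-- a `C`-fixing endomorphism which is the identity modulo `ker π` fixes every power
series with coefficients in `ker π`. -/
theorem fix_ker (hFG : KerFG π) (hsq : ∀ a b : A', π a = 0 → π b = 0 → a * b = 0)
    (e : PowerSeries A' →+* PowerSeries A') (hC : ∀ a, e (C (R := A') a) = C (R := A') a)
    (he : ∀ x, PowerSeries.map π (e x) = PowerSeries.map π x)
    (z : PowerSeries A') (hz : ∀ n, π (coeff (R := A') n z) = 0) : e z = z := by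
  obtain ⟨n, a, ha, hspan⟩ := hFG
  choose c hc using fun m => hspan (coeff (R := A') m z) (hz m)
  set y : Fin n → PowerSeries A' := fun j => PowerSeries.mk fun m => c m j with hy
  have hzdecomp : z = ∑ j, C (R := A') (a j) * y j := by
    ext m
    rw [map_sum, hc m]
    apply Finset.sum_congr rfl
    intro j _
    rw [coeff_C_mul, hy, coeff_mk, mul_comm]
  have hker_coeff : ∀ j m, π (coeff (R := A') m (e (y j) - y j)) = 0 := by
    intro j m
    have := congrArg (coeff (R := A) m) (he (y j))
    rw [PowerSeries.coeff_map, PowerSeries.coeff_map] at this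
    rw [map_sub, map_sub, this, sub_self]
  have hCaz : ∀ j, C (R := A') (a j) * (e (y j) - y j) = 0 := by
    intro j
    ext m
    rw [coeff_C_mul, map_zero, hsq _ _ (ha j) (hker_coeff j m)]
  calc e z = ∑ j, C (R := A') (a j) * e (y j) := by
        rw [hzdecomp, map_sum]
        exact Finset.sum_congr rfl fun j _ => by rw [map_mul, hC]
    _ = ∑ j, C (R := A') (a j) * y j := by
        apply Finset.sum_congr rfl
        intro j _
        have := hCaz j
        rw [mul_sub] at this
        have := sub_eq_zero.mp this
        exact this
    _ = z := hzdecomp.symm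

theorem fix_shift (hFG : KerFG π) (hsq : ∀ a b : A', π a = 0 → π b = 0 → a * b = 0)
    (e : PowerSeries A' →+* PowerSeries A') (hC : ∀ a, e (C (R := A') a) = C (R := A') a)
    (he : ∀ x, PowerSeries.map π (e x) = PowerSeries.map π x)
    (τ : PowerSeries A' → PowerSeries A')
    (hτ : ∀ x, PowerSeries.map π (τ x) = PowerSeries.map π x) (x : PowerSeries A') :
    e (τ x) = (τ x - x) + e x := by
  have hz : ∀ m, π (coeff (R := A') m (τ x - x)) = 0 := by
    intro m
    have := congrArg (coeff (R := A) m) (hτ x)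
    rw [PowerSeries.coeff_map, PowerSeries.coeff_map] at this
    rw [map_sub, map_sub, this, sub_self]
  have h1 : e (τ x) = e (τ x - x) + e x := by rw [← map_add]; ring_nf
  rw [h1, fix_ker π hFG hsq e hC he _ hz]

/-- an identity-lifting `C`-fixing endomorphism is bijective. -/
theorem id_lift_bijective (hFG : KerFG π) (hsq : ∀ a b : A', π a = 0 → π b = 0 → a * b = 0)
    (e : PowerSeries A' →+* PowerSeries A') (hC : ∀ a, e (C (R := A') a) = C (R := A') a)
    (he : ∀ x, PowerSeries.map π (e x) = PowerSeries.map π x) :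
    Function.Bijective e := by
  have h2 : ∀ x, e (e x) = (e x - x) + e x := fun x =>
    fix_shift π hFG hsq e hC he e he x
  constructor
  · intro x y hxy
    have hx := h2 x
    rw [hxy] at hx
    have := (h2 y).symm.trans hx
    linear_combination this
  · intro x
    refine ⟨x + (x - e x), ?_⟩
    have hfix : e (x - e x) = x - e x := by
      apply fix_ker π hFG hsq e hC he
      intro m
      have := congrArg (coeff (R := A) m) (he x)
      rw [PowerSeries.coeff_map, PowerSeries.coeff_map] at this
      rw [map_sub, map_sub, this, sub_self]
    rw [map_add, hfix]
    ring

/-- two identity-lifting `C`-fixing endomorphisms commute. -/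
theorem id_lifts_commute (hFG : KerFG π) (hsq : ∀ a b : A', π a = 0 → π b = 0 → a * b = 0)
    (σ τ : PowerSeries A' →+* PowerSeries A')
    (hσC : ∀ a, σ (C (R := A') a) = C (R := A') a) (hτC : ∀ a, τ (C (R := A') a) = C (R := A') a)
    (hσ : ∀ x, PowerSeries.map π (σ x) = PowerSeries.map π x)
    (hτ : ∀ x, PowerSeries.map π (τ x) = PowerSeries.map π x) (x : PowerSeries A') :
    σ (τ x) = τ (σ x) := by
  rw [fix_shift π hFG hsq σ hσC hσ τ hτ x, fix_shift π hFG hsq τ hτC hτ σ hσ x]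
  ring

end SquareZero

section FG

variable {A' A k : Type} [CommRing A'] [CommRing A] [Field k]

theorem kerFG_of_artinian [IsArtinianRing A'] (π : A' →+* A) (res : A' →+* k)
    (hres : Function.Surjective res)
    (hkill : ∀ a : A', res a = 0 → ∀ x : A', π x = 0 → a * x = 0) : KerFG π := by
  classical
  set M := (RingHom.ker π : Ideal A') with hM
  set s : k → A' := Function.surjInv hres with hsdef
  have hs : ∀ c, res (s c) = c := fun c => Function.surjInv_eq hres c
  have hcongr : ∀ (a b : A'), res a = res b → ∀ x : M, a • x = b • x := by
    intro a b hab x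
    have hxk : π (x : A') = 0 := x.2
    have h0 : (a - b) * (x : A') = 0 :=
      hkill _ (by rw [map_sub, hab, sub_self]) _ hxk
    apply Subtype.ext
    have hcoe : ((a • x : M) : A') = a * (x : A') := rfl
    have hcoe' : ((b • x : M) : A') = b * (x : A') := rfl
    rw [hcoe, hcoe']
    have h1 : a * (x : A') - b * (x : A') = 0 := by rw [← sub_mul, h0]
    linear_combination h1
  letI : SMul k M := ⟨fun c x => s c • x⟩
  have hsmul : ∀ (c : k) (x : M), c • x = s c • x := fun c x => rfl
  letI : Module k M := Module.ofMinimalAxioms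
    (fun c x y => by rw [hsmul, hsmul, hsmul]; exact smul_add _ _ _)
    (fun c c' x => by
      rw [hsmul, hsmul, hsmul, hcongr (s (c + c')) (s c + s c') (by rw [map_add, hs, hs, hs]) x]
      exact add_smul _ _ _)
    (fun c c' x => by
      rw [hsmul, hsmul, hsmul, hcongr (s (c * c')) (s c * s c') (by rw [map_mul, hs, hs, hs]) x]
      exact mul_smul _ _ _)
    (fun x => by rw [hsmul, hcongr (s 1) 1 (by rw [hs, map_one]) x]; exact one_smul _ _)
  letI : Algebra A' k := res.toAlgebra
  haveI : IsScalarTower A' k M := ⟨by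
    intro a c x
    have h1 : a • c = res a * c := by
      rw [Algebra.smul_def, RingHom.algebraMap_toAlgebra]
    rw [h1, hsmul, hsmul, hcongr (s (res a * c)) (a * s c) (by rw [hs, map_mul, hs]) x,
      mul_smul]⟩
  haveI : IsArtinian A' M := inferInstance
  haveI : IsArtinian k M := isArtinian_of_tower A' inferInstance
  have hfin : (Module.Basis.ofVectorSpaceIndex k M).Finite := by
    apply IsArtinian.finite_of_linearIndependent (R := k)
    have := (Module.Basis.ofVectorSpace k M).linearIndependent
    rwa [Module.Basis.coe_ofVectorSpace] at this
  letI := hfin.fintype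
  set b := Module.Basis.ofVectorSpace k M with hb
  set ι := ↥(Module.Basis.ofVectorSpaceIndex k M)
  set n := Fintype.card ι with hn
  set e : ι ≃ Fin n := Fintype.equivFin ι with he
  refine ⟨n, fun j => ((b (e.symm j) : M) : A'), fun j => RingHom.mem_ker.mp (b (e.symm j)).2, ?_⟩
  intro x hx
  set xm : M := ⟨x, by simpa [hM, RingHom.mem_ker] using hx⟩ with hxm
  have hx2 : xm ∈ Submodule.span k (Set.range ⇑b) := by
    rw [b.span_eq]; trivial
  rw [Submodule.mem_span_range_iff_exists_fun (R := k)] at hx2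
  obtain ⟨c, hc⟩ := hx2
  refine ⟨fun j => s (c (e.symm j)), ?_⟩
  have hval := congrArg (Subtype.val : M → A') hc
  have hsum : ((∑ i : ι, c i • b i : M) : A') = ∑ i : ι, s (c i) * ((b i : M) : A') := by
    rw [AddSubmonoidClass.coe_finset_sum]
    apply Finset.sum_congr rfl
    intro i _
    rfl
  rw [hsum] at hval
  exact hval.symm.trans (Equiv.sum_comp e.symm fun i => s (c i) * ((b i : M) : A')).symm

end FG

section Lift

theorem nilpotent_of_mem_max {B : Type} [CommRing B] [IsLocalRing B] [IsArtinianRing B]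
    {a : B} (ha : a ∈ IsLocalRing.maximalIdeal B) : ∃ r, a ^ r = 0 := by
  obtain ⟨n, hn⟩ := IsArtinianRing.isNilpotent_jacobson_bot (R := B)
  rw [IsLocalRing.jacobson_eq_maximalIdeal ⊥ bot_ne_top] at hn
  refine ⟨n, ?_⟩
  have := Ideal.pow_mem_pow ha n
  rw [hn] at this
  simpa using this

variable {A' A : Type} [CommRing A'] [CommRing A]
variable [IsLocalRing A'] [IsLocalRing A] [IsArtinianRing A'] [IsArtinianRing A]

/-- the constant coefficient of the image of `X` under an algebra automorphism of
`A⟦X⟧` is a nonunit. -/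
theorem constantCoeff_aut_X_nonunit (σ : PowerSeries A ≃ₐ[A] PowerSeries A) :
    constantCoeff (R := A) (σ X) ∈ IsLocalRing.maximalIdeal A := by
  rw [IsLocalRing.mem_maximalIdeal]
  intro hunit
  have h1 : IsUnit (σ X) := isUnit_iff_constantCoeff.mpr hunit
  have h2 : IsUnit (X : PowerSeries A) := by
    have := h1.map σ.symm
    rwa [AlgEquiv.symm_apply_apply] at this
  have h3 : IsUnit (constantCoeff (R := A) X) := isUnit_iff_constantCoeff.mp h2
  rw [constantCoeff_X] at h3
  exact not_isUnit_zero h3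

theorem equiv_C_fix (σ : PowerSeries A ≃ₐ[A] PowerSeries A) (a : A) :
    σ (C (R := A) a) = C (R := A) a := by
  have h : (C (R := A) a : PowerSeries A) = algebraMap A (PowerSeries A) a := by
    rw [PowerSeries.algebraMap_apply]
    simp
  rw [h, AlgEquiv.commutes]

/-- lift an endomorphism along a small surjection, as a substitution endomorphism. -/
theorem lift_endo {k : Type} [Field k] (resA' : A' →+* k) (resA : A →+* k)
    (hres'ker : RingHom.ker resA' = IsLocalRing.maximalIdeal A')
    (π : A' →+* A) (hπ : Function.Surjective π) (hπres : resA.comp π = resA')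
    (hresker : RingHom.ker resA = IsLocalRing.maximalIdeal A)
    (τ : PowerSeries A →+* PowerSeries A) (hτC : ∀ a, τ (C (R := A) a) = C (R := A) a)
    (hτc : constantCoeff (R := A) (τ X) ∈ IsLocalRing.maximalIdeal A) :
    ∃ T : PowerSeries A' →+* PowerSeries A',
      (∀ a, T (C (R := A') a) = C (R := A') a) ∧ ∀ x, PowerSeries.map π (T x) = τ (PowerSeries.map π x) := by
  classical
  set s : A → A' := Function.surjInv hπ with hsdef
  have hs : ∀ a, π (s a) = a := fun a => Function.surjInv_eq hπ a
  set f : PowerSeries A := τ X with hf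
  set f' : PowerSeries A' := PowerSeries.mk fun n => s (coeff (R := A) n f) with hf'
  have hmapf : PowerSeries.map π f' = f := by
    ext n
    rw [PowerSeries.coeff_map, hf', coeff_mk, hs]
  have hc'max : constantCoeff (R := A') f' ∈ IsLocalRing.maximalIdeal A' := by
    rw [← hres'ker, RingHom.mem_ker, ← hπres, RingHom.comp_apply]
    have h1 : π (constantCoeff (R := A') f') = constantCoeff (R := A) f := by
      rw [← hmapf]
      rw [← PowerSeries.coeff_zero_eq_constantCoeff_apply,
        ← PowerSeries.coeff_zero_eq_constantCoeff_apply, PowerSeries.coeff_map]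
    rw [h1]
    have := hτc
    rw [← hresker, RingHom.mem_ker] at this
    exact this
  obtain ⟨r, hr⟩ := nilpotent_of_mem_max hc'max
  have hrA : constantCoeff (R := A) f ^ r = 0 := by
    have : π (constantCoeff (R := A') f' ^ r) = constantCoeff (R := A) f ^ r := by
      rw [map_pow]
      congr 1
      rw [← hmapf]
      rw [← PowerSeries.coeff_zero_eq_constantCoeff_apply,
        ← PowerSeries.coeff_zero_eq_constantCoeff_apply, PowerSeries.coeff_map]
    rw [← this, hr, map_zero]
  refine ⟨obsSubstHom f' r hr, fun a => obsSubst_C hr a, fun x => ?_⟩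
  have h1 : PowerSeries.map π (obsSubstHom f' r hr x)
      = obsSubst f r (PowerSeries.map π x) := by
    have := obsSubst_map π f' r x
    rw [hmapf] at this
    exact this
  rw [h1, ← endo_eq_obsSubst τ hτC hrA (PowerSeries.map π x)]

end Lift

section LiftEquiv

variable {A' A k : Type} [CommRing A'] [CommRing A] [Field k]
variable [IsLocalRing A'] [IsLocalRing A] [IsArtinianRing A'] [IsArtinianRing A]

theorem lift_equiv (resA' : A' →+* k) (resA : A →+* k)
    (hres'ker : RingHom.ker resA' = IsLocalRing.maximalIdeal A')
    (hresker : RingHom.ker resA = IsLocalRing.maximalIdeal A)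
    (π : A' →+* A) (hπ : Function.Surjective π) (hπres : resA.comp π = resA')
    (hFG : KerFG π) (hsq : ∀ a b : A', π a = 0 → π b = 0 → a * b = 0)
    (σ : PowerSeries A ≃ₐ[A] PowerSeries A) :
    ∃ σ' : PowerSeries A' ≃ₐ[A'] PowerSeries A',
      ∀ x, PowerSeries.map π (σ' x) = σ (PowerSeries.map π x) := by
  classical
  -- lift `σ` and `σ.symm` as ring endomorphisms
  obtain ⟨S, hSC, hS⟩ := lift_endo resA' resA hres'ker π hπ hπres hresker
    (σ : PowerSeries A ≃+* PowerSeries A).toRingHom (equiv_C_fix σ)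
    (constantCoeff_aut_X_nonunit σ)
  obtain ⟨T, hTC, hT⟩ := lift_endo resA' resA hres'ker π hπ hπres hresker
    (σ.symm : PowerSeries A ≃+* PowerSeries A).toRingHom (equiv_C_fix σ.symm)
    (constantCoeff_aut_X_nonunit σ.symm)
  have hS' : ∀ x, PowerSeries.map π (S x) = σ (PowerSeries.map π x) := hS
  have hT' : ∀ x, PowerSeries.map π (T x) = σ.symm (PowerSeries.map π x) := hT
  -- `S ∘ T` and `T ∘ S` lift the identity, hence are bijective
  have hST : ∀ x, PowerSeries.map π ((S.comp T) x) = PowerSeries.map π x := by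
    intro x
    rw [RingHom.comp_apply, hS', hT', AlgEquiv.apply_symm_apply]
  have hTS : ∀ x, PowerSeries.map π ((T.comp S) x) = PowerSeries.map π x := by
    intro x
    rw [RingHom.comp_apply, hT', hS', AlgEquiv.symm_apply_apply]
  have hSTC : ∀ a, (S.comp T) (C (R := A') a) = C (R := A') a := fun a => by
    rw [RingHom.comp_apply, hTC, hSC]
  have hTSC : ∀ a, (T.comp S) (C (R := A') a) = C (R := A') a := fun a => by
    rw [RingHom.comp_apply, hSC, hTC]
  have hbij1 : Function.Bijective (S.comp T) := id_lift_bijective π hFG hsq _ hSTC hST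
  have hbij2 : Function.Bijective (T.comp S) := id_lift_bijective π hFG hsq _ hTSC hTS
  have hSbij : Function.Bijective S := by
    constructor
    · intro x y hxy
      have : (T.comp S) x = (T.comp S) y := by
        simp only [RingHom.comp_apply, hxy]
      exact hbij2.1 this
    · intro y
      obtain ⟨x, hx⟩ := hbij1.2 y
      exact ⟨T x, hx⟩
  -- bundle as an `A'`-algebra equivalence
  have hmap : ∀ a : A', algebraMap A' (PowerSeries A') a = C (R := A') a := by
    intro a
    rw [PowerSeries.algebraMap_apply]
    simp
  set Salg : PowerSeries A' →ₐ[A'] PowerSeries A' :=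
    { toRingHom := S, commutes' := fun a => by rw [hmap]; exact hSC a } with hSalg
  refine ⟨AlgEquiv.ofBijective Salg hSbij, fun x => ?_⟩
  have happ : (AlgEquiv.ofBijective Salg hSbij) x = S x := rfl
  rw [happ, hS']

theorem equiv_lifts_commute {A' A : Type} [CommRing A'] [CommRing A]
    [IsLocalRing A'] [IsArtinianRing A']
    (π : A' →+* A) (hFG : KerFG π) (hsq : ∀ a b : A', π a = 0 → π b = 0 → a * b = 0)
    (σ τ : PowerSeries A' ≃ₐ[A'] PowerSeries A')
    (hσ : ∀ x, PowerSeries.map π (σ x) = PowerSeries.map π x)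
    (hτ : ∀ x, PowerSeries.map π (τ x) = PowerSeries.map π x) : σ * τ = τ * σ := by
  apply AlgEquiv.ext
  intro x
  rw [AlgEquiv.mul_apply, AlgEquiv.mul_apply]
  exact id_lifts_commute π hFG hsq σ.toAlgHom.toRingHom τ.toAlgHom.toRingHom
    (fun a => equiv_C_fix σ a) (fun a => equiv_C_fix τ a) hσ hτ x

end LiftEquiv

end ObsAux

/-- the obstruction `2`-cochain `η(g,h) = ρ*(g) ∘ ρ*(h) ∘ ρ*(gh)⁻¹` associated to a
set-theoretic lift `ρ*`. -/
noncomputable def obsCocycle {G : Type} [Group G] {A' : Type} [CommRing A']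
    (ρs : G → (PowerSeries A' ≃ₐ[A'] PowerSeries A')) (g h : G) :
    PowerSeries A' ≃ₐ[A'] PowerSeries A' :=
  ρs g * ρs h * (ρs (g * h))⁻¹

/-- Let `A' → A` be a small surjection in `C` with kernel `I`, and
`ρ_A : G → Γ_A` a lift of `ρ` to `A`.  (a) There is a set-theoretic lift
`ρ* : G → Γ_{A'}` of `ρ_A` with `ρ*(1) = id`; (b) for any such `ρ*` the function
`η(g,h) = ρ*(g)∘ρ*(h)∘ρ*(gh)⁻¹` takes values in `Γ_{A',A}` and is a `2`-cocycle for the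
`G`-action on `Γ_{A',A} ≅ Der ⊗ I` given by conjugation with lifts of `ρ(g)`; (c) its
class in `H²(G, Der ⊗ I)` is independent of the choice of `ρ*`; (d) the class vanishes
iff there is a homomorphic lift `ρ_{A'} : G → Γ_{A'}` of `ρ_A`. -/
theorem statement3
    (p : ℕ) [Fact p.Prime]
    (k : Type) [Field k] [CharP k p] [PerfectField k]
    (G : Type) [Group G] [Finite G]
    (ρ : G →* (PowerSeries k ≃ₐ[k] PowerSeries k)) (hρ : Function.Injective ρ)
    (A' A : Type) [CommRing A'] [CommRing A]
    [Algebra (WittVector p k) A'] [Algebra (WittVector p k) A]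
    [IsLocalRing A'] [IsLocalRing A] [IsArtinianRing A'] [IsArtinianRing A]
    (resA' : A' →+* k) (hres'surj : Function.Surjective resA')
    (hres'ker : RingHom.ker resA' = IsLocalRing.maximalIdeal A')
    (resA : A →+* k) (hressurj : Function.Surjective resA)
    (hresker : RingHom.ker resA = IsLocalRing.maximalIdeal A)
    (π : A' →+* A) (hπ : Function.Surjective π) (hπres : resA.comp π = resA')
    (hsmall : ∀ a ∈ IsLocalRing.maximalIdeal A', ∀ x ∈ RingHom.ker π, a * x = 0)
    -- `ρ_A`, a lift of `ρ` to `A`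
    (ρA : G →* (PowerSeries A ≃ₐ[A] PowerSeries A))
    (hρA : ∀ g x, PowerSeries.map resA (ρA g x) = ρ g (PowerSeries.map resA x)) :
    -- (a) existence of a set-theoretic lift of `ρ_A` to `A'`
    (∃ ρs : G → (PowerSeries A' ≃ₐ[A'] PowerSeries A'),
      ρs 1 = 1 ∧ ∀ g x, PowerSeries.map π (ρs g x) = ρA g (PowerSeries.map π x)) ∧
    -- (b) `η` has values in `Γ_{A',A}` and is a 2-cocycle
    (∀ ρs : G → (PowerSeries A' ≃ₐ[A'] PowerSeries A'),
      ρs 1 = 1 → (∀ g x, PowerSeries.map π (ρs g x) = ρA g (PowerSeries.map π x)) →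
      (∀ g h x, PowerSeries.map π (obsCocycle ρs g h x) = PowerSeries.map π x) ∧
      (∀ g h l, obsCocycle ρs g h * obsCocycle ρs (g * h) l =
        (ρs g * obsCocycle ρs h l * (ρs g)⁻¹) * obsCocycle ρs g (h * l))) ∧
    -- (c) the class of `η` is independent of the choice of `ρ*`
    (∀ ρs ρs' : G → (PowerSeries A' ≃ₐ[A'] PowerSeries A'),
      ρs 1 = 1 → (∀ g x, PowerSeries.map π (ρs g x) = ρA g (PowerSeries.map π x)) →
      ρs' 1 = 1 → (∀ g x, PowerSeries.map π (ρs' g x) = ρA g (PowerSeries.map π x)) →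
      ∃ u : G → (PowerSeries A' ≃ₐ[A'] PowerSeries A'),
        (∀ g x, PowerSeries.map π (u g x) = PowerSeries.map π x) ∧
        ∀ g h, obsCocycle ρs' g h =
          u g * (ρs g * u h * (ρs g)⁻¹) * (u (g * h))⁻¹ * obsCocycle ρs g h) ∧
    -- (d) the class vanishes iff a homomorphic lift of `ρ_A` exists
    (∀ ρs : G → (PowerSeries A' ≃ₐ[A'] PowerSeries A'),
      ρs 1 = 1 → (∀ g x, PowerSeries.map π (ρs g x) = ρA g (PowerSeries.map π x)) →
      ((∃ u : G → (PowerSeries A' ≃ₐ[A'] PowerSeries A'),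
          (∀ g x, PowerSeries.map π (u g x) = PowerSeries.map π x) ∧
          ∀ g h, obsCocycle ρs g h =
            u g * (ρs g * u h * (ρs g)⁻¹) * (u (g * h))⁻¹) ↔
        (∃ L : G →* (PowerSeries A' ≃ₐ[A'] PowerSeries A'),
          ∀ g x, PowerSeries.map π (L g x) = ρA g (PowerSeries.map π x)))) := by

  classical
  -- basic consequences of the hypotheses
  have hsq : ∀ a b : A', π a = 0 → π b = 0 → a * b = 0 := by
    intro a b ha hb
    refine hsmall a ?_ b (RingHom.mem_ker.mpr hb)
    rw [← hres'ker, RingHom.mem_ker, ← hπres, RingHom.comp_apply, ha, map_zero]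
  have hFG : ObsAux.KerFG π := ObsAux.kerFG_of_artinian π resA' hres'surj
    (fun a ha x hx => hsmall a
      (by rw [← hres'ker, RingHom.mem_ker]; exact ha) x (RingHom.mem_ker.mpr hx))
  have hcomm : ∀ (σ τ : PowerSeries A' ≃ₐ[A'] PowerSeries A'),
      (∀ x, PowerSeries.map π (σ x) = PowerSeries.map π x) →
      (∀ x, PowerSeries.map π (τ x) = PowerSeries.map π x) → σ * τ = τ * σ :=
    fun σ τ hσ hτ => ObsAux.equiv_lifts_commute π hFG hsq σ τ hσ hτ
  -- group-theoretic combinators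
  have mulA : ∀ (σ τ : PowerSeries A' ≃ₐ[A'] PowerSeries A') x, (σ * τ) x = σ (τ x) :=
    AlgEquiv.mul_apply
  have hinv1 : ∀ (σ : PowerSeries A' ≃ₐ[A'] PowerSeries A') x, σ (σ⁻¹ x) = x := by
    intro σ x
    rw [← AlgEquiv.mul_apply, mul_inv_cancel, AlgEquiv.one_apply]
  set liftG : G → (PowerSeries A' ≃ₐ[A'] PowerSeries A') → Prop :=
    fun g σ => ∀ x, PowerSeries.map π (σ x) = ρA g (PowerSeries.map π x) with hliftG
  set inN : (PowerSeries A' ≃ₐ[A'] PowerSeries A') → Prop :=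
    fun σ => ∀ x, PowerSeries.map π (σ x) = PowerSeries.map π x with hinN
  have liftG_mul : ∀ {g h σ τ}, liftG g σ → liftG h τ → liftG (g * h) (σ * τ) := by
    intro g h σ τ hσ hτ x
    rw [mulA, hσ, hτ, map_mul, AlgEquiv.mul_apply]
  have liftG_inv : ∀ {g σ}, liftG g σ → liftG g⁻¹ σ⁻¹ := by
    intro g σ hσ x
    have h0 := hσ (σ⁻¹ x)
    rw [hinv1] at h0
    have h1 : ρA g⁻¹ (PowerSeries.map π x)
        = ρA g⁻¹ (ρA g (PowerSeries.map π (σ⁻¹ x))) := by rw [← h0]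
    rw [h1, map_inv, ← AlgEquiv.mul_apply, inv_mul_cancel, AlgEquiv.one_apply]
  have inN_of_lift1 : ∀ {σ}, liftG 1 σ → inN σ := by
    intro σ h x
    have := h x
    rwa [map_one, AlgEquiv.one_apply] at this
  have lift1_of_inN : ∀ {σ}, inN σ → liftG 1 σ := by
    intro σ h x
    rw [h x, map_one, AlgEquiv.one_apply]
  have inN_div : ∀ {g σ τ}, liftG g σ → liftG g τ → inN (σ * τ⁻¹) := by
    intro g σ τ h1 h2
    apply inN_of_lift1
    have := liftG_mul h1 (liftG_inv h2)
    rwa [mul_inv_cancel] at this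
  have inN_div' : ∀ {g σ τ}, liftG g σ → liftG g τ → inN (τ⁻¹ * σ) := by
    intro g σ τ h1 h2
    apply inN_of_lift1
    have := liftG_mul (liftG_inv h2) h1
    rwa [inv_mul_cancel] at this
  have inN_inv : ∀ {σ}, inN σ → inN σ⁻¹ := by
    intro σ h
    apply inN_of_lift1
    have := liftG_inv (lift1_of_inN h)
    rwa [inv_one] at this
  have obs_inN : ∀ (ρs : G → (PowerSeries A' ≃ₐ[A'] PowerSeries A')),
      (∀ g, liftG g (ρs g)) → ∀ g h, inN (obsCocycle ρs g h) := by
    intro ρs hl g h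
    exact inN_div (liftG_mul (hl g) (hl h)) (hl (g * h))
  -- lifting of single automorphisms
  have hlift : ∀ g : G, ∃ σ' : PowerSeries A' ≃ₐ[A'] PowerSeries A', liftG g σ' :=
    fun g => ObsAux.lift_equiv resA' resA hres'ker hresker π hπ hπres hFG hsq (ρA g)
  refine ⟨?_, ?_, ?_, ?_⟩
  · -- (a)
    set ρs0 : G → (PowerSeries A' ≃ₐ[A'] PowerSeries A') :=
      fun g => if hg : g = 1 then 1 else Classical.choose (hlift g) with hρs0
    have h1 : ρs0 1 = 1 := dif_pos rfl
    refine ⟨ρs0, h1, ?_⟩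
    intro g x
    by_cases hg : g = 1
    · subst hg
      rw [h1, AlgEquiv.one_apply, map_one, AlgEquiv.one_apply]
    · rw [show ρs0 g = Classical.choose (hlift g) from dif_neg hg]
      exact Classical.choose_spec (hlift g) x
  · -- (b)
    intro ρs h1 hl
    have hl' : ∀ g, liftG g (ρs g) := fun g x => hl g x
    constructor
    · intro g h x
      exact obs_inN ρs hl' g h x
    · intro g h l
      simp only [obsCocycle]
      rw [show g * (h * l) = g * h * l from (mul_assoc g h l).symm]
      group
  · -- (c)
    intro ρs ρs' h1 hl h1' hl'
    have hlg : ∀ g, liftG g (ρs g) := fun g x => hl g x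
    have hlg' : ∀ g, liftG g (ρs' g) := fun g x => hl' g x
    refine ⟨fun g => ρs' g * (ρs g)⁻¹, fun g x => inN_div (hlg' g) (hlg g) x, ?_⟩
    intro g h
    have hw : inN (obsCocycle ρs g h) := obs_inN ρs hlg g h
    have hv : inN (ρs (g * h) * (ρs' (g * h))⁻¹) := inN_div (hlg (g * h)) (hlg' (g * h))
    have hcm := hcomm _ _ hw hv
    simp only [obsCocycle] at hcm ⊢
    calc ρs' g * ρs' h * (ρs' (g * h))⁻¹
        = ρs' g * ρs' h * (ρs h)⁻¹ * (ρs g)⁻¹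
            * (ρs g * ρs h * (ρs (g * h))⁻¹ * (ρs (g * h) * (ρs' (g * h))⁻¹)) := by
          group
      _ = ρs' g * ρs' h * (ρs h)⁻¹ * (ρs g)⁻¹
            * (ρs (g * h) * (ρs' (g * h))⁻¹ * (ρs g * ρs h * (ρs (g * h))⁻¹)) := by
          rw [hcm]
      _ = ρs' g * (ρs g)⁻¹ * (ρs g * (ρs' h * (ρs h)⁻¹) * (ρs g)⁻¹)
            * (ρs' (g * h) * (ρs (g * h))⁻¹)⁻¹ * (ρs g * ρs h * (ρs (g * h))⁻¹) := by
          group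
  · -- (d)
    intro ρs h1 hl
    have hlg : ∀ g, liftG g (ρs g) := fun g x => hl g x
    constructor
    · rintro ⟨u, hu, hub⟩
      have huN : ∀ g, inN (u g) := fun g x => hu g x
      have hxN : ∀ g h, inN (ρs g * u h * (ρs g)⁻¹) := by
        intro g h
        apply inN_of_lift1
        have := liftG_mul (liftG_mul (hlg g) (lift1_of_inN (huN h))) (liftG_inv (hlg g))
        rwa [mul_one, mul_inv_cancel] at this
      refine ⟨MonoidHom.mk' (fun g => (u g)⁻¹ * ρs g) ?_, ?_⟩
      · intro g h
        have hδ : ρs g * ρs h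
            = u g * (ρs g * u h * (ρs g)⁻¹) * (u (g * h))⁻¹ * ρs (g * h) := by
          have := hub g h
          simp only [obsCocycle] at this
          rw [← this]
          group
        have hc2 := hcomm ((ρs g * u h * (ρs g)⁻¹)⁻¹) (u g) (inN_inv (hxN g h)) (huN g)
        symm
        calc (u g)⁻¹ * ρs g * ((u h)⁻¹ * ρs h)
            = (u g)⁻¹ * (ρs g * u h * (ρs g)⁻¹)⁻¹ * (ρs g * ρs h) := by group
          _ = (u g)⁻¹ * (ρs g * u h * (ρs g)⁻¹)⁻¹
                * (u g * (ρs g * u h * (ρs g)⁻¹) * (u (g * h))⁻¹ * ρs (g * h)) := by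
              rw [← hδ]
          _ = (u g)⁻¹ * ((ρs g * u h * (ρs g)⁻¹)⁻¹ * u g)
                * (ρs g * u h * (ρs g)⁻¹) * (u (g * h))⁻¹ * ρs (g * h) := by group
          _ = (u g)⁻¹ * (u g * (ρs g * u h * (ρs g)⁻¹)⁻¹)
                * (ρs g * u h * (ρs g)⁻¹) * (u (g * h))⁻¹ * ρs (g * h) := by rw [hc2]
          _ = (u (g * h))⁻¹ * ρs (g * h) := by group
      · intro g x
        have h2 : inN ((u g)⁻¹) := inN_inv (huN g)
        rw [show (MonoidHom.mk' (fun g => (u g)⁻¹ * ρs g) _) g = (u g)⁻¹ * ρs g from rfl,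
          mulA, h2, hl g x]
    · rintro ⟨L, hL⟩
      have hLg : ∀ g, liftG g (L g) := fun g x => hL g x
      refine ⟨fun g => ρs g * (L g)⁻¹, fun g x => inN_div (hlg g) (hLg g) x, ?_⟩
      intro g h
      have hp : inN ((L g)⁻¹ * ρs g) := inN_div' (hlg g) (hLg g)
      have hq : inN (ρs h * (L h)⁻¹) := inN_div (hlg h) (hLg h)
      have hc := hcomm _ _ hp hq
      have hone : ((L g)⁻¹ * ρs g) * (ρs h * (L h)⁻¹) * ((L g)⁻¹ * ρs g)⁻¹
          * (ρs h * (L h)⁻¹)⁻¹ = 1 := by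
        rw [hc]
        group
      have hLm : L (g * h) = L g * L h := map_mul L g h
      simp only [obsCocycle]
      rw [hLm]
      symm
      calc ρs g * (L g)⁻¹ * (ρs g * (ρs h * (L h)⁻¹) * (ρs g)⁻¹)
            * (ρs (g * h) * (L g * L h)⁻¹)⁻¹
          = ρs g * (((L g)⁻¹ * ρs g) * (ρs h * (L h)⁻¹) * ((L g)⁻¹ * ρs g)⁻¹
              * (ρs h * (L h)⁻¹)⁻¹) * ρs h * (ρs (g * h))⁻¹ := by group
        _ = ρs g * 1 * ρs h * (ρs (g * h))⁻¹ := by rw [hone]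
        _ = ρs g * ρs h * (ρs (g * h))⁻¹ := by group
end

section
/- Let A be an object of C and ρ_A : G → Aut_A(A[[t]]) a lift of the local G-action ρ to A. Set y = ∏_{g∈G} ρ_A(g)(t) ∈ A[[t]] (the constant term of y is nilpotent, so substitution of y into power series over A converges t-adically). Then the ring of invariants A[[t]]^G = {x ∈ A[[t]] : ρ_A(g)(x) = x for all g ∈ G} equals A[[y]] := {h(y) : h ∈ A[[T]]}. -/
open PowerSeries
open scoped Classical

/-- `t`-adic substitution `h(y)`: the `m`-th coefficient of `h(y)` is the eventual value
of the `m`-th coefficient of the partial sums `∑_{n<M} h_n yⁿ` (with junk value `0` if the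
sequence of coefficients does not stabilize). -/
noncomputable def substSeries {A : Type} [CommRing A] (y h : PowerSeries A) :
    PowerSeries A :=
  PowerSeries.mk fun m =>
    if H : ∃ c : A, ∀ᶠ M in Filter.atTop,
        PowerSeries.coeff (R := A) m
          (∑ n ∈ Finset.range M, PowerSeries.C (R := A) (PowerSeries.coeff (R := A) n h) * y ^ n) = c
    then H.choose else 0

namespace Stmt7

open Finset

variable {A : Type} [CommRing A]

lemma coeff_zero_of_dvd {f : PowerSeries A} {n m : ℕ} (h : (X : PowerSeries A) ^ n ∣ f)
    (hm : m < n) : PowerSeries.coeff (R := A) m f = 0 :=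
  PowerSeries.X_pow_dvd_iff.mp h m hm

lemma coeff_sum_CX (a : ℕ → A) (q j : ℕ) :
    PowerSeries.coeff (R := A) j (∑ i ∈ Finset.range q, PowerSeries.C (R := A) (a i) * X ^ i) =
      if j < q then a j else 0 := by
  rw [map_sum]
  have h1 : ∀ i ∈ Finset.range q, PowerSeries.coeff (R := A) j (PowerSeries.C (R := A) (a i) * X ^ i)
      = if i = j then a i else 0 := by
    intro i _
    rw [PowerSeries.coeff_C_mul, PowerSeries.coeff_X_pow]
    by_cases h : j = i
    · subst h; simp
    · simp [h, Ne.symm h]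
  rw [Finset.sum_congr rfl h1, Finset.sum_ite_eq' (Finset.range q) j a]
  simp [Finset.mem_range]

lemma partial_stable {y : PowerSeries A} (hy : PowerSeries.constantCoeff (R := A) y = 0)
    (h : PowerSeries A) (m : ℕ) {M : ℕ} (hM : m + 1 ≤ M) :
    PowerSeries.coeff (R := A) m
        (∑ n ∈ Finset.range M, PowerSeries.C (R := A) (PowerSeries.coeff (R := A) n h) * y ^ n) =
      PowerSeries.coeff (R := A) m
        (∑ n ∈ Finset.range (m + 1), PowerSeries.C (R := A) (PowerSeries.coeff (R := A) n h) * y ^ n) := by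
  have key : ∀ n, m < n →
      PowerSeries.coeff (R := A) m (PowerSeries.C (R := A) (PowerSeries.coeff (R := A) n h) * y ^ n) = 0 := by
    intro n hn
    exact coeff_zero_of_dvd
      ((pow_dvd_pow_of_dvd (PowerSeries.X_dvd_iff.mpr hy) n).mul_left _) hn
  rw [Finset.range_eq_Ico, ← Finset.sum_Ico_consecutive _ (Nat.zero_le (m + 1)) hM, map_add]
  have h0 : PowerSeries.coeff (R := A) m
      (∑ n ∈ Finset.Ico (m + 1) M, PowerSeries.C (R := A) (PowerSeries.coeff (R := A) n h) * y ^ n) = 0 := by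
    rw [map_sum]
    apply Finset.sum_eq_zero
    intro n hn
    exact key n (lt_of_lt_of_le (Nat.lt_succ_self m) (Finset.mem_Ico.mp hn).1)
  rw [h0, add_zero, Finset.range_eq_Ico]

lemma partial_exists {y : PowerSeries A} (hy : PowerSeries.constantCoeff (R := A) y = 0)
    (h : PowerSeries A) (m : ℕ) :
    ∃ c : A, ∀ᶠ M in Filter.atTop,
      PowerSeries.coeff (R := A) m
        (∑ n ∈ Finset.range M, PowerSeries.C (R := A) (PowerSeries.coeff (R := A) n h) * y ^ n) = c :=
  ⟨PowerSeries.coeff (R := A) m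
      (∑ n ∈ Finset.range (m + 1), PowerSeries.C (R := A) (PowerSeries.coeff (R := A) n h) * y ^ n),
    Filter.eventually_atTop.mpr ⟨m + 1, fun _ hM => partial_stable hy h m hM⟩⟩

lemma coeff_substSeries {y : PowerSeries A} (hy : PowerSeries.constantCoeff (R := A) y = 0)
    (h : PowerSeries A) (m M : ℕ) (hM : m + 1 ≤ M) :
    PowerSeries.coeff (R := A) m (substSeries y h) =
      PowerSeries.coeff (R := A) m
        (∑ n ∈ Finset.range M, PowerSeries.C (R := A) (PowerSeries.coeff (R := A) n h) * y ^ n) := by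
  have H : ∃ c : A, ∀ᶠ M' in Filter.atTop,
      PowerSeries.coeff (R := A) m
        (∑ n ∈ Finset.range M', PowerSeries.C (R := A) (PowerSeries.coeff (R := A) n h) * y ^ n) = c :=
    partial_exists hy h m
  rw [substSeries, PowerSeries.coeff_mk, dif_pos H]
  obtain ⟨M₀, hM₀⟩ := Filter.eventually_atTop.mp H.choose_spec
  have h1 := hM₀ (max M₀ (m + 1)) (le_max_left _ _)
  rw [← h1, partial_stable hy h m (le_max_right _ _), ← partial_stable hy h m hM]

lemma regular_of_unit_coeff (I : Ideal A) (N : ℕ) (hIN : I ^ N = ⊥)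
    (f : PowerSeries A) (v : ℕ) (hu : IsUnit (PowerSeries.coeff (R := A) v f))
    (hlow : ∀ j < v, PowerSeries.coeff (R := A) j f ∈ I) :
    ∀ x : PowerSeries A, f * x = 0 → x = 0 := by
  intro x hx
  obtain ⟨u, huu⟩ := hu
  have key : ∀ e n, PowerSeries.coeff (R := A) n x ∈ I ^ e := by
    intro e
    induction e with
    | zero => intro n; simp [Ideal.one_eq_top]
    | succ e ihe =>
      intro n
      induction n using Nat.strong_induction_on with
      | _ n ih =>
        have h0 : PowerSeries.coeff (R := A) (v + n) (f * x) = 0 := by rw [hx]; simp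
        rw [PowerSeries.coeff_mul] at h0
        have hmem : ((v, n) : ℕ × ℕ) ∈ Finset.HasAntidiagonal.antidiagonal (v + n) := by
          simp [Finset.HasAntidiagonal.mem_antidiagonal]
        rw [← Finset.add_sum_erase _ _ hmem] at h0
        have hsum : ∑ p ∈ (Finset.HasAntidiagonal.antidiagonal (v + n)).erase (v, n),
            PowerSeries.coeff (R := A) p.1 f * PowerSeries.coeff (R := A) p.2 x ∈ I ^ (e + 1) := by
          apply Ideal.sum_mem
          intro p hp
          obtain ⟨hpne, hpmem⟩ := Finset.mem_erase.mp hp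
          have hpadd : p.1 + p.2 = v + n := Finset.HasAntidiagonal.mem_antidiagonal.mp hpmem
          rcases lt_trichotomy p.1 v with hlt | heq | hgt
          · rw [pow_succ']
            exact Ideal.mul_mem_mul (hlow _ hlt) (ihe p.2)
          · exfalso
            apply hpne
            have h2 : p.2 = n := by omega
            have h1 : p.1 = v := heq
            cases p
            simp_all
          · have h2 : p.2 < n := by omega
            exact Ideal.mul_mem_left _ _ (ih p.2 h2)
        have hvn : PowerSeries.coeff (R := A) v f * PowerSeries.coeff (R := A) n x ∈ I ^ (e + 1) := by
          have heq := eq_neg_of_add_eq_zero_left h0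
          rw [heq]
          exact neg_mem hsum
        have hrw : PowerSeries.coeff (R := A) n x =
            ↑u⁻¹ * (PowerSeries.coeff (R := A) v f * PowerSeries.coeff (R := A) n x) := by
          rw [← huu, Units.inv_mul_cancel_left]
        rw [hrw]
        exact Ideal.mul_mem_left _ _ hvn
  ext n
  have h1 := key N n
  rw [hIN] at h1
  simpa using h1

lemma division (I : Ideal A) (N : ℕ) (hIN : I ^ N = ⊥) (y : PowerSeries A) (q : ℕ)
    (hu : IsUnit (PowerSeries.coeff (R := A) q y)) (hlow : ∀ j < q, PowerSeries.coeff (R := A) j y ∈ I)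
    (f : PowerSeries A) :
    ∃ Q R : PowerSeries A,
      (∀ j, q ≤ j → PowerSeries.coeff (R := A) j R = 0) ∧ f = Q * y + R := by
  set r : PowerSeries A :=
    PowerSeries.mk (fun j => if j < q then PowerSeries.coeff (R := A) j y else 0) with hr
  have hrI : ∀ j, PowerSeries.coeff (R := A) j r ∈ I := by
    intro j
    rw [hr, PowerSeries.coeff_mk]
    split_ifs with hj
    · exact hlow j hj
    · exact Submodule.zero_mem I
  have hXq : (X : PowerSeries A) ^ q ∣ (y - r) := by
    rw [PowerSeries.X_pow_dvd_iff]
    intro m hm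
    rw [map_sub, hr, PowerSeries.coeff_mk, if_pos hm, sub_self]
  obtain ⟨U, hU⟩ := hXq
  have hUc : PowerSeries.constantCoeff (R := A) U = PowerSeries.coeff (R := A) q y := by
    have h1 := PowerSeries.coeff_X_pow_mul U q 0
    rw [← hU, map_sub, hr, PowerSeries.coeff_mk] at h1
    rw [← PowerSeries.coeff_zero_eq_constantCoeff_apply, ← h1]
    simp
  have hUunit : IsUnit U := PowerSeries.isUnit_iff_constantCoeff.mpr (hUc ▸ hu)
  obtain ⟨u, huu⟩ := hUunit
  have main : ∀ d : ℕ, ∀ g : PowerSeries A,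
      (∀ j, PowerSeries.coeff (R := A) j g ∈ I ^ (N - d)) →
      ∃ Q R : PowerSeries A,
        (∀ j, q ≤ j → PowerSeries.coeff (R := A) j R = 0) ∧ g = Q * y + R := by
    intro d
    induction d with
    | zero =>
      intro g hg
      have hg0 : g = 0 := by
        ext n
        have h1 := hg n
        rw [Nat.sub_zero, hIN] at h1
        simpa using h1
      exact ⟨0, 0, fun j _ => by simp, by simp [hg0]⟩
    | succ d ihd =>
      intro g hg
      set R0 : PowerSeries A :=
        PowerSeries.mk (fun j => if j < q then PowerSeries.coeff (R := A) j g else 0) with hR0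
      have hXg : (X : PowerSeries A) ^ q ∣ (g - R0) := by
        rw [PowerSeries.X_pow_dvd_iff]
        intro m hm
        rw [map_sub, hR0, PowerSeries.coeff_mk, if_pos hm, sub_self]
      obtain ⟨w, hw⟩ := hXg
      have hwI : ∀ n, PowerSeries.coeff (R := A) n w ∈ I ^ (N - (d + 1)) := by
        intro n
        have h1 : PowerSeries.coeff (R := A) (n + q) (g - R0) = PowerSeries.coeff (R := A) n w := by
          rw [hw]; exact PowerSeries.coeff_X_pow_mul w q n
        have h2 : PowerSeries.coeff (R := A) (n + q) (g - R0) = PowerSeries.coeff (R := A) (n + q) g := by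
          rw [map_sub, hR0, PowerSeries.coeff_mk, if_neg (by omega), sub_zero]
        rw [← h1, h2]
        exact hg _
      set Q0 : PowerSeries A := w * ↑u⁻¹ with hQ0
      have hQ0I : ∀ n, PowerSeries.coeff (R := A) n Q0 ∈ I ^ (N - (d + 1)) := by
        intro n
        rw [hQ0, PowerSeries.coeff_mul]
        apply Ideal.sum_mem
        intro p _
        exact Ideal.mul_mem_right _ _ (hwI p.1)
      have hQ0e : Q0 * (y - r) = g - R0 := by
        rw [hU, hQ0, ← huu, hw]
        have h5 : w * ↑u⁻¹ * ((X : PowerSeries A) ^ q * ↑u)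
            = (X : PowerSeries A) ^ q * w * (↑u⁻¹ * ↑u) := by ring
        rw [h5, Units.inv_mul, mul_one]
      set g' : PowerSeries A := -(Q0 * r) with hg'
      have hg'I : ∀ j, PowerSeries.coeff (R := A) j g' ∈ I ^ (N - d) := by
        intro j
        rw [hg', map_neg]
        apply neg_mem
        rw [PowerSeries.coeff_mul]
        apply Ideal.sum_mem
        intro p _
        have hsub : I ^ (N - (d + 1)) * I ≤ I ^ (N - d) := by
          rw [← pow_succ]
          exact Ideal.pow_le_pow_right (by omega)
        exact hsub (Ideal.mul_mem_mul (hQ0I p.1) (hrI p.2))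
      obtain ⟨Q', R', hR', hgQR⟩ := ihd g' hg'I
      refine ⟨Q0 + Q', R0 + R', ?_, ?_⟩
      · intro j hj
        rw [map_add, hR0, PowerSeries.coeff_mk, if_neg (by omega), hR' j hj, add_zero]
      · linear_combination -hQ0e + hgQR - hg'
  have h1 : ∀ j, PowerSeries.coeff (R := A) j f ∈ I ^ (N - N) := by
    intro j
    simp [Nat.sub_self, Ideal.one_eq_top]
  exact main N f h1

lemma aut_apply_eq {K : Type} [CommRing K] (χ : PowerSeries K ≃ₐ[K] PowerSeries K)
    (hχ : χ PowerSeries.X = PowerSeries.X) (f : PowerSeries K) : χ f = f := by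
  ext m
  set T : PowerSeries K :=
    ∑ i ∈ Finset.range (m + 1), PowerSeries.C (R := K) (PowerSeries.coeff (R := K) i f) * X ^ i with hT
  have hdvd : (X : PowerSeries K) ^ (m + 1) ∣ (f - T) := by
    rw [PowerSeries.X_pow_dvd_iff]
    intro j hj
    rw [map_sub, hT, coeff_sum_CX, if_pos hj, sub_self]
  obtain ⟨w, hw⟩ := hdvd
  have hfT : f = T + X ^ (m + 1) * w := by rw [← hw]; ring
  have hχT : χ T = T := by
    rw [hT, map_sum]
    apply Finset.sum_congr rfl
    intro i _
    rw [map_mul, map_pow, hχ]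
    congr 1
    rw [PowerSeries.C_eq_algebraMap]
    exact χ.commutes _
  have h1 : ∀ z : PowerSeries K, PowerSeries.coeff (R := K) m (X ^ (m + 1) * z) = 0 := fun z =>
    coeff_zero_of_dvd (dvd_mul_right _ _) (Nat.lt_succ_self m)
  rw [hfT, map_add, map_mul, map_pow, hχ, hχT]
  rw [map_add, map_add, h1, h1]

lemma aut_constantCoeff {K : Type} [Field K] (φ : PowerSeries K ≃ₐ[K] PowerSeries K) :
    PowerSeries.constantCoeff (R := K) (φ PowerSeries.X) = 0 := by
  by_contra h
  have hunit : IsUnit (φ (PowerSeries.X : PowerSeries K)) :=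
    PowerSeries.isUnit_iff_constantCoeff.mpr (isUnit_iff_ne_zero.mpr h)
  have hX : IsUnit (PowerSeries.X : PowerSeries K) := by
    have h2 := hunit.map φ.symm
    rwa [φ.symm_apply_apply] at h2
  have h3 := hX.map (PowerSeries.constantCoeff (R := K))
  rw [PowerSeries.constantCoeff_X] at h3
  exact not_isUnit_zero h3

lemma aut_coeff_one {K : Type} [Field K] (φ : PowerSeries K ≃ₐ[K] PowerSeries K) :
    PowerSeries.coeff (R := K) 1 (φ PowerSeries.X) ≠ 0 := by
  intro h1
  have h0 := aut_constantCoeff φ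
  have hdvd : (X : PowerSeries K) ^ 2 ∣ φ PowerSeries.X := by
    rw [PowerSeries.X_pow_dvd_iff]
    intro m hm
    interval_cases m
    · rw [PowerSeries.coeff_zero_eq_constantCoeff_apply]; exact h0
    · exact h1
  obtain ⟨w, hw⟩ := hdvd
  have hXdvd : (X : PowerSeries K) ∣ φ.symm PowerSeries.X :=
    PowerSeries.X_dvd_iff.mpr (aut_constantCoeff φ.symm)
  obtain ⟨vv, hv⟩ := hXdvd
  have hX : (PowerSeries.X : PowerSeries K) = φ.symm (φ PowerSeries.X) :=
    (φ.symm_apply_apply PowerSeries.X).symm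
  rw [hw, map_mul, map_pow, hv] at hX
  have hz : PowerSeries.coeff (R := K) 1 ((PowerSeries.X * vv) ^ 2 * φ.symm w) = 0 := by
    have hd : (X : PowerSeries K) ^ 2 ∣ (PowerSeries.X * vv) ^ 2 * φ.symm w :=
      ⟨vv ^ 2 * φ.symm w, by ring⟩
    exact coeff_zero_of_dvd hd one_lt_two
  rw [← hX, PowerSeries.coeff_one_X] at hz
  exact one_ne_zero hz

end Stmt7

/-- Let `A ∈ C` and `ρ_A : G → Aut_A(A[[t]])` a lift of the local
`G`-action `ρ` to `A`.  With `y = ∏ g ∈ G, ρ_A(g)(t)`, substitution of `y` into power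
series over `A` converges `t`-adically, and the ring of invariants
`A[[t]]^G = {x : ρ_A(g)(x) = x ∀g}` equals `A[[y]] = {h(y) : h ∈ A[[T]]}`. -/
theorem statement7
    (p : ℕ) [Fact p.Prime]
    (k : Type) [Field k] [CharP k p] [PerfectField k]
    (G : Type) [Group G] [Fintype G]
    (ρ : G →* (PowerSeries k ≃ₐ[k] PowerSeries k)) (hρ : Function.Injective ρ)
    (A : Type) [CommRing A] [Algebra (WittVector p k) A]
    [IsLocalRing A] [IsArtinianRing A]
    (resA : A →+* k) (hressurj : Function.Surjective resA)
    (hresker : RingHom.ker resA = IsLocalRing.maximalIdeal A)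
    (ρA : G →* (PowerSeries A ≃ₐ[A] PowerSeries A))
    (hρA : ∀ g x, PowerSeries.map resA (ρA g x) = ρ g (PowerSeries.map resA x))
    (y : PowerSeries A) (hy : y = ∏ g : G, ρA g PowerSeries.X) :
    -- substitution of `y` converges `t`-adically
    (∀ (h : PowerSeries A) (m : ℕ), ∃ c : A, ∀ᶠ M in Filter.atTop,
      PowerSeries.coeff (R := A) m
        (∑ n ∈ Finset.range M, PowerSeries.C (R := A) (PowerSeries.coeff (R := A) n h) * y ^ n) = c) ∧
    -- `A[[t]]^G = A[[y]]`
    {x : PowerSeries A | ∀ g : G, ρA g x = x} =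
      {x : PowerSeries A | ∃ h : PowerSeries A, x = substSeries y h} := by
  classical
  -- basic local-ring facts
  obtain ⟨N, hN⟩ : ∃ N, (IsLocalRing.maximalIdeal A) ^ N = ⊥ := by
    obtain ⟨N, hN⟩ := IsArtinianRing.isNilpotent_jacobson_bot (R := A)
    exact ⟨N, by rwa [IsLocalRing.jacobson_eq_maximalIdeal ⊥ bot_ne_top] at hN⟩
  have hmem : ∀ a : A, resA a = 0 → a ∈ IsLocalRing.maximalIdeal A := by
    intro a ha
    rw [← hresker]
    exact ha
  have hunit : ∀ a : A, resA a ≠ 0 → IsUnit a := by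
    intro a ha
    apply IsLocalRing.notMem_maximalIdeal.mp
    rw [← hresker]
    exact fun hcon => ha hcon
  -- reduction of the generators
  have hsmap : ∀ g : G, PowerSeries.map resA (ρA g PowerSeries.X) = ρ g PowerSeries.X := by
    intro g
    rw [hρA g PowerSeries.X, PowerSeries.map_X]
  have hres_coeff : ∀ (g : G) (n : ℕ),
      resA (PowerSeries.coeff (R := A) n (ρA g PowerSeries.X)) =
        PowerSeries.coeff (R := k) n (ρ g PowerSeries.X) := by
    intro g n
    rw [← hsmap g, PowerSeries.coeff_map]
  have hsc : ∀ g : G,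
      PowerSeries.constantCoeff (R := A) (ρA g PowerSeries.X) ∈ IsLocalRing.maximalIdeal A := by
    intro g
    apply hmem
    rw [← PowerSeries.coeff_zero_eq_constantCoeff_apply, hres_coeff g 0,
      PowerSeries.coeff_zero_eq_constantCoeff_apply]
    exact Stmt7.aut_constantCoeff (ρ g)
  -- constant coefficient of y is 0
  have hy0 : PowerSeries.constantCoeff (R := A) y = 0 := by
    rw [hy, map_prod]
    apply Finset.prod_eq_zero (Finset.mem_univ (1 : G))
    rw [map_one ρA, AlgEquiv.one_apply, PowerSeries.constantCoeff_X]
  -- y is invariant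
  have hyinv : ∀ g : G, ρA g y = y := by
    intro g
    rw [hy, map_prod]
    have h1 : ∀ h : G, ρA g (ρA h PowerSeries.X) = ρA (g * h) PowerSeries.X := by
      intro h
      rw [map_mul ρA, AlgEquiv.mul_apply]
    rw [Finset.prod_congr rfl (fun h _ => h1 h)]
    exact Fintype.prod_bijective (fun h => g * h) (Group.mulLeft_bijective g) _ _
      (fun h => rfl)
  set q := Fintype.card G with hq
  have hqpos : 0 < q := Fintype.card_pos
  -- reduction of y
  have hymap : PowerSeries.map resA y = ∏ g : G, ρ g PowerSeries.X := by
    rw [hy, map_prod]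
    exact Finset.prod_congr rfl fun g _ => hsmap g
  have hwex : ∀ g : G, ∃ w : PowerSeries k,
      PowerSeries.X * w = ρ g PowerSeries.X ∧
      PowerSeries.constantCoeff (R := k) w = PowerSeries.coeff (R := k) 1 (ρ g PowerSeries.X) := by
    intro g
    obtain ⟨w, hwg⟩ := PowerSeries.X_dvd_iff.mpr (Stmt7.aut_constantCoeff (ρ g))
    refine ⟨w, hwg.symm, ?_⟩
    have h1 := PowerSeries.coeff_succ_X_mul 0 w
    rw [← hwg] at h1
    rw [← PowerSeries.coeff_zero_eq_constantCoeff_apply]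
    simpa using h1.symm
  choose w hw1 hw2 using hwex
  have hybar : PowerSeries.map resA y = PowerSeries.X ^ q * ∏ g : G, w g := by
    rw [hymap, ← Finset.prod_congr rfl (fun g _ => hw1 g), Finset.prod_mul_distrib,
      Finset.prod_const, Finset.card_univ, hq]
  have hylow : ∀ j, j < q → PowerSeries.coeff (R := A) j y ∈ IsLocalRing.maximalIdeal A := by
    intro j hj
    apply hmem
    have h1 : resA (PowerSeries.coeff (R := A) j y) = PowerSeries.coeff (R := k) j (PowerSeries.map resA y) := by
      rw [PowerSeries.coeff_map]
    rw [h1, hybar]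
    exact Stmt7.coeff_zero_of_dvd (dvd_mul_right _ _) hj
  have hyq : IsUnit (PowerSeries.coeff (R := A) q y) := by
    apply hunit
    have h1 : resA (PowerSeries.coeff (R := A) q y) = PowerSeries.coeff (R := k) q (PowerSeries.map resA y) := by
      rw [PowerSeries.coeff_map]
    rw [h1, hybar]
    have h2 : PowerSeries.coeff (R := k) q (PowerSeries.X ^ q * ∏ g : G, w g)
        = PowerSeries.coeff (R := k) 0 (∏ g : G, w g) := by
      simpa using PowerSeries.coeff_X_pow_mul (∏ g : G, w g) q 0
    rw [h2, PowerSeries.coeff_zero_eq_constantCoeff_apply, map_prod]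
    apply Finset.prod_ne_zero_iff.mpr
    intro g _
    rw [hw2 g]
    exact Stmt7.aut_coeff_one (ρ g)
  -- substSeries y h is invariant
  have hsubstinv : ∀ (g : G) (hh : PowerSeries A),
      ρA g (substSeries y hh) = substSeries y hh := by
    intro g hh
    ext m
    set M := m + N + 1 with hM
    set P : PowerSeries A :=
      ∑ n ∈ Finset.range M, PowerSeries.C (R := A) (PowerSeries.coeff (R := A) n hh) * y ^ n with hP
    have hPc : ∀ m', m' + 1 ≤ M →
        PowerSeries.coeff (R := A) m' (substSeries y hh) = PowerSeries.coeff (R := A) m' P :=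
      fun m' hm' => Stmt7.coeff_substSeries hy0 hh m' M hm'
    have hdvd : (X : PowerSeries A) ^ M ∣ (substSeries y hh - P) := by
      rw [PowerSeries.X_pow_dvd_iff]
      intro j hj
      rw [map_sub, hPc j (by omega), sub_self]
    obtain ⟨D, hD⟩ := hdvd
    have hsubst_eq : substSeries y hh = P + X ^ M * D := by rw [← hD]; ring
    have hρP : ρA g P = P := by
      rw [hP, map_sum]
      apply Finset.sum_congr rfl
      intro n _
      rw [map_mul, map_pow, hyinv g]
      congr 1
      rw [PowerSeries.C_eq_algebraMap]
      exact (ρA g).commutes _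
    have hkey : ∀ z : PowerSeries A,
        PowerSeries.coeff (R := A) m ((ρA g PowerSeries.X) ^ M * z) = 0 := by
      intro z
      set c := PowerSeries.constantCoeff (R := A) (ρA g PowerSeries.X) with hc
      have hcN : c ^ N = 0 := by
        have h1 : c ^ N ∈ (IsLocalRing.maximalIdeal A) ^ N := Ideal.pow_mem_pow (hsc g) N
        rw [hN] at h1
        simpa using h1
      have hXdvd : (X : PowerSeries A) ∣ (ρA g PowerSeries.X - PowerSeries.C (R := A) c) := by
        rw [PowerSeries.X_dvd_iff, map_sub, PowerSeries.constantCoeff_C, hc, sub_self]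
      have hsplit : ρA g PowerSeries.X
          = (ρA g PowerSeries.X - PowerSeries.C (R := A) c) + PowerSeries.C (R := A) c := by ring
      rw [hsplit, add_pow, Finset.sum_mul, map_sum]
      apply Finset.sum_eq_zero
      intro i hi
      rcases le_or_gt i m with him | him
      · have hc0 : c ^ (M - i) = 0 := by
          obtain ⟨t, ht⟩ : ∃ t, M - i = N + t := ⟨M - i - N, by omega⟩
          rw [ht, pow_add, hcN, zero_mul]
        have hC0 : (PowerSeries.C (R := A) c) ^ (M - i) = 0 := by
          rw [← map_pow, hc0, map_zero]
        rw [hC0]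
        simp
      · have hd : (X : PowerSeries A) ^ (m + 1) ∣
            ((ρA g PowerSeries.X - PowerSeries.C (R := A) c) ^ i * (PowerSeries.C (R := A) c) ^ (M - i) *
              (M.choose i : PowerSeries A) * z) := by
          have h1 : (X : PowerSeries A) ^ i ∣ (ρA g PowerSeries.X - PowerSeries.C (R := A) c) ^ i :=
            pow_dvd_pow_of_dvd hXdvd i
          have h2 : (X : PowerSeries A) ^ (m + 1) ∣ (X : PowerSeries A) ^ i :=
            pow_dvd_pow _ (by omega)
          exact (((h2.trans h1).mul_right _).mul_right _).mul_right _
        exact Stmt7.coeff_zero_of_dvd hd (Nat.lt_succ_self m)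
    have hz2 : PowerSeries.coeff (R := A) m ((X : PowerSeries A) ^ M * D) = 0 :=
      Stmt7.coeff_zero_of_dvd (dvd_mul_right _ _) (by omega)
    rw [hsubst_eq, map_add, map_mul, map_pow, hρP, map_add, map_add, hz2,
      hkey (ρA g D), add_zero]
  constructor
  · -- convergence
    intro h m
    exact Stmt7.partial_exists hy0 h m
  · -- equality of sets
    ext x
    simp only [Set.mem_setOf_eq]
    constructor
    · -- invariants are in A[[y]]
      intro hxinv
      -- divide repeatedly by y
      have hdiv : ∀ f : PowerSeries A, ∃ Q R : PowerSeries A,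
          (∀ j, q ≤ j → PowerSeries.coeff (R := A) j R = 0) ∧ f = Q * y + R :=
        fun f => Stmt7.division (IsLocalRing.maximalIdeal A) N hN y q hyq
          (fun j hj => hylow j hj) f
      choose Qf Rf hRf hQRf using hdiv
      set Qs : ℕ → PowerSeries A := fun j => Nat.rec x (fun _ prev => Qf prev) j with hQs
      have hQsrec : ∀ j, Qs j = Qs (j + 1) * y + Rf (Qs j) := fun j => hQRf (Qs j)
      set R : ℕ → PowerSeries A := fun j => Rf (Qs j) with hR
      have hpart : ∀ J, x = (∑ j ∈ Finset.range J, R j * y ^ j) + Qs J * y ^ J := by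
        intro J
        induction J with
        | zero => simp [hQs]
        | succ J ih =>
          rw [Finset.sum_range_succ, ih]
          have h1 := hQsrec J
          rw [hR]
          linear_combination (y ^ J) * h1
      have hxcoeff : ∀ m, PowerSeries.coeff (R := A) m x =
          PowerSeries.coeff (R := A) m (∑ j ∈ Finset.range (m + 1), R j * y ^ j) := by
        intro m
        rw [hpart (m + 1), map_add]
        have h1 : PowerSeries.coeff (R := A) m (Qs (m + 1) * y ^ (m + 1)) = 0 :=
          Stmt7.coeff_zero_of_dvd
            ((pow_dvd_pow_of_dvd (PowerSeries.X_dvd_iff.mpr hy0) (m + 1)).mul_left _)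
            (Nat.lt_succ_self m)
        rw [h1, add_zero]
      set hseq : ℕ → PowerSeries A :=
        fun i => PowerSeries.mk fun j => PowerSeries.coeff (R := A) i (R j) with hhseq
      -- the decomposition x = ∑_{i<q} (hseq i)(y) * X^i
      have key : x = ∑ i ∈ Finset.range q, substSeries y (hseq i) * X ^ i := by
        ext m
        rw [map_sum]
        have hterm : ∀ i ∈ Finset.range q,
            PowerSeries.coeff (R := A) m (substSeries y (hseq i) * X ^ i) =
            PowerSeries.coeff (R := A) m
              ((∑ j ∈ Finset.range (m + 1),
                PowerSeries.C (R := A) (PowerSeries.coeff (R := A) i (R j)) * y ^ j) * X ^ i) := by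
          intro i _
          set Pi : PowerSeries A := ∑ j ∈ Finset.range (m + 1),
            PowerSeries.C (R := A) (PowerSeries.coeff (R := A) i (R j)) * y ^ j with hPi
          have hPi' : Pi = ∑ j ∈ Finset.range (m + 1),
              PowerSeries.C (R := A) (PowerSeries.coeff (R := A) j (hseq i)) * y ^ j := by
            rw [hPi]
            apply Finset.sum_congr rfl
            intro j _
            rw [hhseq, PowerSeries.coeff_mk]
          have hdvd : (X : PowerSeries A) ^ (m + 1) ∣ (substSeries y (hseq i) - Pi) := by
            rw [PowerSeries.X_pow_dvd_iff]
            intro j hj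
            rw [map_sub, Stmt7.coeff_substSeries hy0 _ j (m + 1) (by omega), hPi', sub_self]
          have h1 : PowerSeries.coeff (R := A) m (substSeries y (hseq i) * X ^ i) -
              PowerSeries.coeff (R := A) m (Pi * X ^ i) =
              PowerSeries.coeff (R := A) m ((substSeries y (hseq i) - Pi) * X ^ i) := by
            rw [sub_mul, map_sub]
          have h2 : PowerSeries.coeff (R := A) m ((substSeries y (hseq i) - Pi) * X ^ i) = 0 :=
            Stmt7.coeff_zero_of_dvd (hdvd.mul_right _) (Nat.lt_succ_self m)
          have h3 := h1.trans h2
          rw [sub_eq_zero] at h3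
          exact h3
        rw [Finset.sum_congr rfl hterm, ← map_sum]
        have hswap : (∑ i ∈ Finset.range q,
            (∑ j ∈ Finset.range (m + 1),
              PowerSeries.C (R := A) (PowerSeries.coeff (R := A) i (R j)) * y ^ j) * X ^ i)
            = ∑ j ∈ Finset.range (m + 1), R j * y ^ j := by
          have hstep1 : ∀ i ∈ Finset.range q,
              (∑ j ∈ Finset.range (m + 1),
                PowerSeries.C (R := A) (PowerSeries.coeff (R := A) i (R j)) * y ^ j) * X ^ i
              = ∑ j ∈ Finset.range (m + 1),
                PowerSeries.C (R := A) (PowerSeries.coeff (R := A) i (R j)) * y ^ j * X ^ i :=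
            fun i _ => Finset.sum_mul _ _ _
          rw [Finset.sum_congr rfl hstep1, Finset.sum_comm]
          apply Finset.sum_congr rfl
          intro j _
          have hRj : ∑ i ∈ Finset.range q,
              PowerSeries.C (R := A) (PowerSeries.coeff (R := A) i (R j)) * X ^ i = R j := by
            ext n
            rw [Stmt7.coeff_sum_CX]
            split_ifs with hn
            · rfl
            · exact (hRf (Qs j) n (by omega)).symm
          calc ∑ i ∈ Finset.range q,
              PowerSeries.C (R := A) (PowerSeries.coeff (R := A) i (R j)) * y ^ j * X ^ i
              = (∑ i ∈ Finset.range q,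
                PowerSeries.C (R := A) (PowerSeries.coeff (R := A) i (R j)) * X ^ i) * y ^ j := by
                rw [Finset.sum_mul]
                apply Finset.sum_congr rfl
                intro i _
                ring
            _ = R j * y ^ j := by rw [hRj]
        rw [hswap]
        exact hxcoeff m
      -- the G-equations
      have hGeq : ∀ g : G,
          ∑ i ∈ Finset.range q, substSeries y (hseq i) * (ρA g PowerSeries.X) ^ i = x := by
        intro g
        have h1 := congrArg (ρA g) key
        rw [hxinv g, map_sum] at h1
        have heach : ∀ i ∈ Finset.range q,
            ρA g (substSeries y (hseq i) * X ^ i)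
            = substSeries y (hseq i) * (ρA g PowerSeries.X) ^ i := by
          intro i _
          rw [map_mul, map_pow, hsubstinv g]
        rw [Finset.sum_congr rfl heach] at h1
        exact h1.symm
      -- Cramer / Vandermonde argument
      haveI : NeZero q := ⟨hqpos.ne'⟩
      set e : Fin q ≃ G := (Fintype.equivFin G).symm with he
      set v : Fin q → PowerSeries A := fun i => ρA (e i) PowerSeries.X with hv
      set V := Matrix.vandermonde v with hV
      set Hvec : Fin q → PowerSeries A := fun j => substSeries y (hseq (j : ℕ)) with hHvec
      have hmulVec : V.mulVec Hvec = fun _ => x := by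
        funext i
        have h1 := hGeq (e i)
        rw [Finset.sum_range] at h1
        simp only [Matrix.mulVec, dotProduct]
        rw [← h1]
        apply Finset.sum_congr rfl
        intro j _
        rw [hV, Matrix.vandermonde_apply, hv, hHvec]
        ring
      have hfactor : ∀ i j : Fin q, i ≠ j → ∀ z : PowerSeries A,
          (v j - v i) * z = 0 → z = 0 := by
        intro i j hij z hz
        have hmapfd : PowerSeries.map resA (v j - v i)
            = ρ (e j) PowerSeries.X - ρ (e i) PowerSeries.X := by
          rw [map_sub, hv]
          simp only []
          rw [hsmap, hsmap]
        have hne : PowerSeries.map resA (v j - v i) ≠ 0 := by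
          rw [hmapfd]
          intro hcon
          rw [sub_eq_zero] at hcon
          have h1 : ρ ((e i)⁻¹ * e j) PowerSeries.X = PowerSeries.X := by
            rw [map_mul, AlgEquiv.mul_apply, hcon, ← AlgEquiv.mul_apply, ← map_mul,
              inv_mul_cancel, map_one, AlgEquiv.one_apply]
          have h2 : ρ ((e i)⁻¹ * e j) = 1 := by
            apply AlgEquiv.ext
            intro f
            rw [Stmt7.aut_apply_eq _ h1 f, AlgEquiv.one_apply]
          have h3 : (e i)⁻¹ * e j = 1 := hρ (by rw [h2, map_one])
          have h4 : e j = e i := by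
            have := congrArg (fun z => e i * z) h3
            simpa [mul_assoc] using this
          exact hij (e.injective h4).symm
        have hex : ∃ n, PowerSeries.coeff (R := k) n (PowerSeries.map resA (v j - v i)) ≠ 0 := by
          by_contra hcon
          push_neg at hcon
          exact hne (PowerSeries.ext fun n => by simpa using hcon n)
        have hn0 := Nat.find_spec hex
        have hn0min : ∀ l, l < Nat.find hex →
            PowerSeries.coeff (R := k) l (PowerSeries.map resA (v j - v i)) = 0 :=
          fun l hl => not_not.mp (Nat.find_min hex hl)
        refine Stmt7.regular_of_unit_coeff (IsLocalRing.maximalIdeal A) N hN (v j - v i)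
          (Nat.find hex) ?_ ?_ z hz
        · apply hunit
          rw [← PowerSeries.coeff_map]
          exact hn0
        · intro l hl
          apply hmem
          rw [← PowerSeries.coeff_map]
          exact hn0min l hl
      have hdetreg : ∀ z : PowerSeries A, V.det * z = 0 → z = 0 := by
        have hdet : V.det = ∏ i : Fin q, ∏ j ∈ Finset.Ioi i, (v j - v i) :=
          Matrix.det_vandermonde v
        rw [hdet]
        refine Finset.prod_induction _ (fun ww => ∀ z, ww * z = 0 → z = 0) ?_ ?_ ?_
        · intro a b ha hb z hz
          exact hb z (ha (b * z) (by rw [← mul_assoc]; exact hz))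
        · intro z hz
          simpa using hz
        · intro i _
          refine Finset.prod_induction _ (fun ww => ∀ z, ww * z = 0 → z = 0) ?_ ?_ ?_
          · intro a b ha hb z hz
            exact hb z (ha (b * z) (by rw [← mul_assoc]; exact hz))
          · intro z hz
            simpa using hz
          · intro j hj
            exact hfactor i j (Finset.mem_Ioi.mp hj).ne 
      have hcram : V.det • Hvec = Matrix.cramer V (fun _ => x) := by
        calc V.det • Hvec
            = (V.det • (1 : Matrix (Fin q) (Fin q) (PowerSeries A))).mulVec Hvec := by
              rw [Matrix.smul_mulVec, Matrix.one_mulVec]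
          _ = (V.adjugate * V).mulVec Hvec := by rw [Matrix.adjugate_mul]
          _ = V.adjugate.mulVec (V.mulVec Hvec) := by rw [Matrix.mulVec_mulVec]
          _ = V.adjugate.mulVec (fun _ => x) := by rw [hmulVec]
          _ = Matrix.cramer V (fun _ => x) := (Matrix.cramer_eq_adjugate_mulVec V _).symm
      have hHzero : ∀ i : Fin q, i ≠ 0 → Hvec i = 0 := by
        intro i hi
        have h1 : V.det * Hvec i = Matrix.cramer V (fun _ => x) i := by
          have := congrFun hcram i
          simpa using this
        have h2 : Matrix.cramer V (fun _ => x) i = 0 := by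
          rw [Matrix.cramer_apply]
          have hb : (fun _ : Fin q => x) = x • (fun _ : Fin q => (1 : PowerSeries A)) := by
            funext l
            simp
          rw [hb, Matrix.det_updateCol_smul]
          have hz : (V.updateCol i fun _ => (1 : PowerSeries A)).det = 0 := by
            have hcols : V.updateCol i (fun _ => (1 : PowerSeries A))
                = Matrix.transpose (Matrix.updateRow (Matrix.transpose V) i (fun _ => (1 : PowerSeries A))) := by
              rw [← Matrix.updateCol_transpose, Matrix.transpose_transpose]
            rw [hcols, Matrix.det_transpose]
            apply Matrix.det_zero_of_row_eq hi
            funext l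
            rw [Matrix.updateRow_self, Matrix.updateRow_ne (Ne.symm hi)]
            rw [Matrix.transpose_apply, hV, Matrix.vandermonde_apply]
            simp
          rw [hz, mul_zero]
        exact hdetreg _ (h1.trans h2)
      refine ⟨hseq 0, ?_⟩
      rw [key]
      rw [Finset.sum_eq_single_of_mem 0 (Finset.mem_range.mpr hqpos)]
      · rw [pow_zero, mul_one]
      · intro i hi hine
        have h1 : Hvec ⟨i, Finset.mem_range.mp hi⟩ = 0 := by
          apply hHzero
          simp [Fin.ext_iff, hine]
        have h2 : substSeries y (hseq i) = 0 := by
          rw [hHvec] at h1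
          simpa using h1
        rw [h2, zero_mul]
    · -- A[[y]] consists of invariants
      rintro ⟨h, rfl⟩ g
      exact hsubstinv g h
end

section
/- Let N be a normal subgroup of G, let a : G → k((t)) satisfy a_{gs} = ρ(g)(a_s) + a_g for all g ∈ G, s ∈ N, and set α = −y_N · (y_N')^{-1} · Σ_{s∈N} a_s · f_s' · f_s^{-1} ∈ k((t)). Let d := ord(y_N') (which is the order of the different of the extension k[[t]]^N ⊆ k[[t]]). Then ord(α) ≥ inf_{s∈N} ord(a_s) + #N − d − 1. -/
open PowerSeries

/-- the canonical embedding `k[[t]] → k((t))`. -/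
noncomputable def toL {k : Type} [Field k] (x : PowerSeries k) : LaurentSeries k :=
  HahnSeries.ofPowerSeries ℤ k x

/-- `ord(x) ≥ n` for the `t`-adic valuation on `k((t))` (with `ord 0 = ∞`). -/
def ordGE {k : Type} [Field k] (x : LaurentSeries k) (n : ℤ) : Prop :=
  x = 0 ∨ n ≤ HahnSeries.order x

section Aux

variable {k : Type} [Field k]

lemma ordGE_mono {x : LaurentSeries k} {n m : ℤ} (h : ordGE x n) (hmn : m ≤ n) : ordGE x m :=
  h.imp id (le_trans hmn)

lemma ordGE_neg {x : LaurentSeries k} {n : ℤ} (h : ordGE x n) : ordGE (-x) n := by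
  rcases h with h | h
  · left; simp [h]
  · right; rwa [HahnSeries.order_neg]

lemma ordGE_mul {x y : LaurentSeries k} {n m : ℤ} (hx : ordGE x n) (hy : ordGE y m) :
    ordGE (x * y) (n + m) := by
  by_cases hx0 : x = 0
  · left; simp [hx0]
  by_cases hy0 : y = 0
  · left; simp [hy0]
  right
  rw [HahnSeries.order_mul hx0 hy0]
  exact add_le_add (hx.resolve_left hx0) (hy.resolve_left hy0)

lemma ordGE_add {x y : LaurentSeries k} {n : ℤ} (hx : ordGE x n) (hy : ordGE y n) :
    ordGE (x + y) n := by
  by_cases hx0 : x = 0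
  · simpa [hx0] using hy
  by_cases hy0 : y = 0
  · simpa [hy0] using hx
  by_cases hxy : x + y = 0
  · left; exact hxy
  right
  refine le_trans (le_min (hx.resolve_left hx0) (hy.resolve_left hy0))
    (HahnSeries.min_order_le_order_add hxy)

lemma ordGE_sum {ι : Type*} (F : Finset ι) (f : ι → LaurentSeries k) (n : ℤ)
    (h : ∀ i ∈ F, ordGE (f i) n) : ordGE (∑ i ∈ F, f i) n := by
  classical
  induction F using Finset.induction_on with
  | empty => left; simp
  | @insert a s hx ih =>
    rw [Finset.sum_insert hx]
    exact ordGE_add (h a (Finset.mem_insert_self a s))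
      (ih fun i hi => h i (Finset.mem_insert_of_mem hi))

lemma ordGE_prod {ι : Type*} (F : Finset ι) (f : ι → LaurentSeries k) (c : ι → ℤ)
    (h : ∀ i ∈ F, ordGE (f i) (c i)) : ordGE (∏ i ∈ F, f i) (∑ i ∈ F, c i) := by
  classical
  induction F using Finset.induction_on with
  | empty => right; simp [HahnSeries.order_one]
  | @insert a s hx ih =>
    rw [Finset.prod_insert hx, Finset.sum_insert hx]
    exact ordGE_mul (h a (Finset.mem_insert_self a s))
      (ih fun i hi => h i (Finset.mem_insert_of_mem hi))

lemma ordGE_inv {x : LaurentSeries k} {e : ℤ} (hx : x ≠ 0) (he : x.order = e) :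
    ordGE x⁻¹ (-e) := by
  have hinv : x⁻¹ ≠ 0 := inv_ne_zero hx
  right
  have h := HahnSeries.order_mul hx hinv
  rw [mul_inv_cancel₀ hx, HahnSeries.order_one, he] at h
  linarith [h.symm]

lemma toL_ne_zero {f : PowerSeries k} (hf : f ≠ 0) : toL f ≠ 0 := by
  intro h
  apply hf
  apply HahnSeries.ofPowerSeries_injective (Γ := ℤ)
  rw [map_zero]
  exact h

lemma toL_coeff (f : PowerSeries k) (i : ℤ) :
    (toL f).coeff i = if i < 0 then 0 else PowerSeries.coeff i.natAbs f :=
  PowerSeries.coeff_coe f i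

lemma ordGE_toL {f : PowerSeries k} {n : ℕ} (h : (n : ℕ∞) ≤ f.order) : ordGE (toL f) n := by
  by_cases h0 : toL f = 0
  · left; exact h0
  right
  set o := (toL f).order with ho
  have hc : (toL f).coeff o ≠ 0 := fun hc0 => h0 (HahnSeries.coeff_order_eq_zero.mp hc0)
  rw [toL_coeff] at hc
  by_cases hneg : o < 0
  · simp [hneg] at hc
  rw [if_neg hneg] at hc
  have h1 : f.order ≤ (o.natAbs : ℕ∞) := PowerSeries.order_le _ hc
  have h2 : (n : ℕ∞) ≤ (o.natAbs : ℕ∞) := le_trans h h1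
  have h3 : n ≤ o.natAbs := by exact_mod_cast h2
  omega

lemma order_toL {f : PowerSeries k} {e : ℕ} (he : f.order = (e : ℕ∞)) :
    (toL f).order = (e : ℤ) := by
  have hf : f ≠ 0 := by
    intro h
    rw [h, PowerSeries.order_zero] at he
    exact (ENat.top_ne_coe e) he
  apply le_antisymm
  · apply HahnSeries.order_le_of_coeff_ne_zero
    rw [toL_coeff, if_neg (by omega : ¬ (e : ℤ) < 0)]
    have := (PowerSeries.order_eq_nat.mp he).1
    simpa using this
  · exact (ordGE_toL (le_of_eq he.symm)).resolve_left (toL_ne_zero hf)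

lemma order_derivative_ge {f : PowerSeries k} {n : ℕ}
    (h : ((n + 1 : ℕ) : ℕ∞) ≤ f.order) :
    ((n : ℕ) : ℕ∞) ≤ (PowerSeries.derivative k f).order := by
  apply PowerSeries.le_order
  intro i hi
  have hi' : i < n := by exact_mod_cast hi
  rw [PowerSeries.coeff_derivative]
  have hlt : ((i + 1 : ℕ) : ℕ∞) < f.order := by
    refine lt_of_lt_of_le ?_ h
    exact_mod_cast Nat.succ_lt_succ hi'
  rw [PowerSeries.coeff_of_lt_order _ hlt, zero_mul]

lemma one_le_order_algEquiv_X (e : PowerSeries k ≃ₐ[k] PowerSeries k) :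
    (1 : ℕ∞) ≤ (e PowerSeries.X).order := by
  have hcc : PowerSeries.constantCoeff (e PowerSeries.X) = 0 := by
    by_contra hc
    have hu : IsUnit (e PowerSeries.X) :=
      PowerSeries.isUnit_iff_constantCoeff.mpr (Ne.isUnit hc)
    have hX : IsUnit (PowerSeries.X : PowerSeries k) := by
      have := hu.map e.symm
      simpa using this
    have := PowerSeries.isUnit_iff_constantCoeff.mp hX
    simp [PowerSeries.constantCoeff_X] at this
  apply PowerSeries.le_order
  intro i hi
  have : i = 0 := by
    have : (i : ℕ∞) < (1 : ℕ) := by exact_mod_cast hi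
    have : i < 1 := by exact_mod_cast this
    omega
  subst this
  simpa using hcc

end Aux

/-- In the situation of the previous lemma, with
`d = ord(y_N')` the order of the different of `k[[t]]^N ⊆ k[[t]]`, one has
`ord(α) ≥ inf_{s∈N} ord(a_s) + #N − d − 1`. -/
theorem statement10
    (p : ℕ) [Fact p.Prime]
    (k : Type) [Field k] [CharP k p] [PerfectField k]
    (G : Type) [Group G] [Fintype G]
    (ρ : G →* (PowerSeries k ≃ₐ[k] PowerSeries k)) (hρ : Function.Injective ρ)
    (ρL : G →* (LaurentSeries k ≃ₐ[k] LaurentSeries k))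
    (hρL : ∀ g x, ρL g (toL x) = toL (ρ g x))
    (N : Subgroup G) (hN : N.Normal) [DecidablePred (· ∈ N)]
    (yN : PowerSeries k)
    (hyN : yN = ∏ s ∈ Finset.univ.filter (· ∈ N), ρ s PowerSeries.X)
    (d : ℕ) (hd : (PowerSeries.derivative k yN).order = (d : ℕ∞))
    (a : G → LaurentSeries k)
    (ha : ∀ g : G, ∀ s ∈ N, a (g * s) = ρL g (a s) + a g)
    (α : LaurentSeries k)
    (hα : α = -(toL yN * (toL (PowerSeries.derivative k yN))⁻¹ *
      ∑ s ∈ Finset.univ.filter (· ∈ N),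
        a s * toL (PowerSeries.derivative k (ρ s PowerSeries.X)) *
          (toL (ρ s PowerSeries.X))⁻¹)) :
    ∀ m : ℤ, (∀ s ∈ N, ordGE (a s) m) →
      ordGE α (m + ((Finset.univ.filter (· ∈ N)).card : ℤ) - (d : ℤ) - 1) := by
  intro m hm
  set F := Finset.univ.filter (· ∈ N) with hF
  -- each summand has order ≥ m - 1
  have key : ∀ s ∈ F,
      ordGE (a s * toL (PowerSeries.derivative k (ρ s PowerSeries.X)) *
        (toL (ρ s PowerSeries.X))⁻¹) (m - 1) := by
    intro s hs
    have hsN : s ∈ N := by simpa [hF] using hs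
    have hfne : (ρ s PowerSeries.X : PowerSeries k) ≠ 0 := by
      intro h
      exact PowerSeries.X_ne_zero ((ρ s).injective (by simpa using h))
    have hford : (1 : ℕ∞) ≤ (ρ s PowerSeries.X : PowerSeries k).order :=
      one_le_order_algEquiv_X (ρ s)
    obtain ⟨r, hr⟩ : ∃ r : ℕ, (ρ s PowerSeries.X : PowerSeries k).order = (r : ℕ∞) := by
      refine ⟨(ρ s PowerSeries.X : PowerSeries k).order.toNat, ?_⟩
      exact (ENat.coe_toNat (by
        rw [← lt_top_iff_ne_top]
        exact PowerSeries.order_finite_iff_ne_zero.mpr hfne)).symm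
    have hr1 : 1 ≤ r := by
      rw [hr] at hford
      exact_mod_cast hford
    have h1 : ordGE (a s) m := hm s hsN
    have h2 : ordGE (toL (PowerSeries.derivative k (ρ s PowerSeries.X)))
        ((r - 1 : ℕ) : ℤ) := by
      apply ordGE_toL
      apply order_derivative_ge
      rw [Nat.sub_add_cancel hr1, hr]
    have h3 : ordGE ((toL (ρ s PowerSeries.X))⁻¹) (-(r : ℤ)) :=
      ordGE_inv (toL_ne_zero hfne) (order_toL hr)
    have h := ordGE_mul (ordGE_mul h1 h2) h3
    apply ordGE_mono h
    have : ((r - 1 : ℕ) : ℤ) = (r : ℤ) - 1 := by omega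
    omega
  have hsum : ordGE (∑ s ∈ F,
      a s * toL (PowerSeries.derivative k (ρ s PowerSeries.X)) *
        (toL (ρ s PowerSeries.X))⁻¹) (m - 1) :=
    ordGE_sum _ _ _ key
  -- order of yN
  have hyL : toL yN = ∏ s ∈ F, toL (ρ s PowerSeries.X : PowerSeries k) := by
    rw [hyN, toL]
    exact map_prod (HahnSeries.ofPowerSeries ℤ k) _ _
  have hYord : ordGE (toL yN) (F.card : ℤ) := by
    rw [hyL]
    have h := ordGE_prod F (fun s => toL (ρ s PowerSeries.X : PowerSeries k))
      (fun _ => (1 : ℤ)) (fun s _ => ordGE_toL (n := 1) (one_le_order_algEquiv_X (ρ s)))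
    simpa using h
  -- order of (yN')⁻¹
  have hy'ne : PowerSeries.derivative k yN ≠ 0 := by
    intro h
    rw [h, PowerSeries.order_zero] at hd
    exact (ENat.top_ne_coe d) hd
  have h4 : ordGE ((toL (PowerSeries.derivative k yN))⁻¹) (-(d : ℤ)) :=
    ordGE_inv (toL_ne_zero hy'ne) (order_toL hd)
  have hfin := ordGE_neg (ordGE_mul (ordGE_mul hYord h4) hsum)
  rw [hα]
  apply ordGE_mono hfin
  omega
end

section
/- Let N be a normal subgroup of G and let c : G → Der be a map such that c_{gs} = c_g + g·c_s for all g ∈ G, s ∈ N. Set α = −y_N · (y_G'/y_N') · Σ_{s∈N} c_s(f_s)/f_s ∈ k((t)). Then: (i) for every g ∈ G, ρ(g)(α) − α = c_g(y_G) − ρ(g)(y_N)·(y_G'/y_N')·(y_N'/(ρ(g)(y_N))')·Σ_{s∈N} c_{gs}(f_{gs})/f_{gs} + y_N·(y_G'/y_N')·Σ_{s∈N} c_s(f_s)/f_s; in particular ρ(s)(α) − α = c_s(y_G) for all s ∈ N; (ii) ord(α) ≥ ord(y_G') − ord(y_N'), i.e. α lies in the ideal (y_G'/y_N')·k[[t]]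 of k[[t]] (the extension to k[[t]] of the different of k[[t]]^N over k[[t]]^G). -/
open PowerSeries

lemma toL_mul {k : Type} [Field k] (a b : PowerSeries k) : toL (a*b) = toL a * toL b :=
  map_mul (HahnSeries.ofPowerSeries ℤ k) a b

lemma toL_add {k : Type} [Field k] (a b : PowerSeries k) : toL (a+b) = toL a + toL b :=
  map_add (HahnSeries.ofPowerSeries ℤ k) a b

lemma toL_sub {k : Type} [Field k] (a b : PowerSeries k) : toL (a-b) = toL a - toL b :=
  map_sub (HahnSeries.ofPowerSeries ℤ k) a b

lemma toL_neg {k : Type} [Field k] (a : PowerSeries k) : toL (-a) = - toL a :=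
  map_neg (HahnSeries.ofPowerSeries ℤ k) a

lemma toL_zero {k : Type} [Field k] : toL (0 : PowerSeries k) = 0 :=
  map_zero (HahnSeries.ofPowerSeries ℤ k)

lemma toL_sum {k : Type} [Field k] {ι : Type} (s : Finset ι) (f : ι → PowerSeries k) :
    toL (∑ i ∈ s, f i) = ∑ i ∈ s, toL (f i) :=
  map_sum (HahnSeries.ofPowerSeries ℤ k) f s

lemma toL_inj {k : Type} [Field k] : Function.Injective (toL (k := k)) :=
  HahnSeries.ofPowerSeries_injective

lemma toL_ne_zero_s12 {k : Type} [Field k] {x : PowerSeries k} (hx : x ≠ 0) : toL x ≠ 0 := by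
  intro h
  exact hx (toL_inj (by rw [h]; exact toL_zero.symm))

lemma st12_aeval_coe {k : Type} [Field k] (Q : Polynomial k) :
    (Polynomial.aeval (PowerSeries.X : PowerSeries k)) Q = (Q : PowerSeries k) := by
  rw [Polynomial.aeval_def, ← Polynomial.eval₂_C_X_eq_coe]; rfl

lemma st12_derivation_poly {k : Type} [Field k]
    (d : Derivation k (PowerSeries k) (PowerSeries k)) (Q : Polynomial k) :
    d (Q : PowerSeries k) = ((Polynomial.derivative Q : Polynomial k) : PowerSeries k) * d PowerSeries.X := by
  rw [← st12_aeval_coe Q, Derivation.map_aeval, st12_aeval_coe, smul_eq_mul]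

/-- every derivation of `k[[t]]` is `f ↦ f' ⬝ d(t)`. -/
lemma st12_derivation_eq {k : Type} [Field k]
    (d : Derivation k (PowerSeries k) (PowerSeries k)) (f : PowerSeries k) :
    d f = PowerSeries.derivative k f * d PowerSeries.X := by
  have key : ∀ m : ℕ, (PowerSeries.X : PowerSeries k) ^ m ∣
      d f - PowerSeries.derivative k f * d PowerSeries.X := by
    intro m
    set P := trunc m f with hP
    obtain ⟨g, hg⟩ : (X : PowerSeries k)^m ∣ f - ↑P := by
      refine X_pow_dvd_iff.mpr (fun i hi => ?_)
      simp [hP, coeff_trunc, hi]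
    have hf : f = (P : PowerSeries k) + X^m * g := by rw [← hg]; ring
    refine ⟨d g - PowerSeries.derivative k g * d X, ?_⟩
    rw [hf]
    have e1 := st12_derivation_poly d P
    have e2 := st12_derivation_poly (PowerSeries.derivative k) P
    simp only [map_add, Derivation.leibniz, Derivation.leibniz_pow, smul_eq_mul,
      nsmul_eq_mul, e1, e2, PowerSeries.derivative_X]
    ring
  have h0 : d f - PowerSeries.derivative k f * d PowerSeries.X = 0 := by
    ext n
    have := X_pow_dvd_iff.mp (key (n+1)) n (lt_add_one n)
    simpa using this
  linear_combination (norm := ring_nf) h0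

/-- chain rule for automorphisms. -/
lemma st12_chain {k : Type} [Field k] (σ : PowerSeries k ≃ₐ[k] PowerSeries k) (f : PowerSeries k) :
    PowerSeries.derivative k (σ f)
      = PowerSeries.derivative k (σ PowerSeries.X) * σ (PowerSeries.derivative k f) := by
  let D : Derivation k (PowerSeries k) (PowerSeries k) :=
  { toFun := fun a => σ.symm (PowerSeries.derivative k (σ a))
    map_add' := fun a b => by simp
    map_smul' := fun r a => by simp
    map_one_eq_zero' := by simp
    leibniz' := fun a b => by
      simp [Derivation.leibniz, smul_eq_mul, map_mul, map_add, mul_comm] }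
  have hD : ∀ a, D a = σ.symm (PowerSeries.derivative k (σ a)) := fun a => rfl
  have h := st12_derivation_eq D f
  rw [hD, hD] at h
  have h2 := congrArg σ h
  simpa [map_mul, mul_comm] using h2

lemma st12_coeff_one {k : Type} [Field k] (σ : PowerSeries k ≃ₐ[k] PowerSeries k) :
    PowerSeries.coeff 1 (σ PowerSeries.X) ≠ 0 := by
  have h0 : ∀ τ : PowerSeries k ≃ₐ[k] PowerSeries k, PowerSeries.constantCoeff (τ X) = 0 := by
    intro τ
    by_contra h
    have hu : IsUnit (τ X) := PowerSeries.isUnit_iff_constantCoeff.mpr (isUnit_iff_ne_zero.mpr h)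
    have hX : IsUnit (X : PowerSeries k) := by
      have := hu.map τ.symm
      simpa using this
    have := PowerSeries.isUnit_iff_constantCoeff.mp hX
    simp at this
  intro h1
  have h2 : (X : PowerSeries k)^2 ∣ σ X := by
    refine X_pow_dvd_iff.mpr (fun i hi => ?_)
    interval_cases i
    · simpa using h0 σ
    · exact h1
  obtain ⟨u, hu⟩ := h2
  obtain ⟨v, hv⟩ := PowerSeries.X_dvd_iff.mpr (h0 σ.symm)
  have h4 : (X : PowerSeries k) = X^2 * (v^2 * σ.symm u) := by
    conv_lhs => rw [← σ.symm_apply_apply X, hu]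
    rw [map_mul, map_pow, hv]
    ring
  have h5 := X_pow_dvd_iff.mp ⟨_, h4⟩ 1 one_lt_two
  simp at h5

lemma st12_toL_coeff {k : Type} [Field k] (x : PowerSeries k) (n : ℕ) :
    (toL x).coeff (n : ℤ) = PowerSeries.coeff n x :=
  HahnSeries.ofPowerSeries_apply_coeff x n

lemma st12_toL_coeff_neg {k : Type} [Field k] (x : PowerSeries k) {n : ℤ} (hn : n < 0) :
    (toL x).coeff n = 0 := by
  rw [toL, HahnSeries.ofPowerSeries_apply]
  apply HahnSeries.embDomain_notin_range
  rintro ⟨m, hm⟩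
  have hm' : (m : ℤ) = n := hm
  omega

lemma st12_toL_order_nonneg {k : Type} [Field k] {x : PowerSeries k} (hx : x ≠ 0) :
    0 ≤ (toL x).order := by
  by_contra h
  push_neg at h
  exact (HahnSeries.coeff_order_eq_zero.not.mpr (toL_ne_zero_s12 hx)) (st12_toL_coeff_neg x h)

lemma st12_toL_order {k : Type} [Field k] {x : PowerSeries k} {n : ℕ}
    (h : x.order = (n : ℕ∞)) : (toL x).order = (n : ℤ) := by
  obtain ⟨h1, h2⟩ := PowerSeries.order_eq_nat.mp h
  have hx : x ≠ 0 := by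
    intro h0
    rw [h0, PowerSeries.order_zero] at h
    simp at h
  have hne : toL x ≠ 0 := toL_ne_zero_s12 hx
  apply le_antisymm
  · exact HahnSeries.order_le_of_coeff_ne_zero (by rwa [st12_toL_coeff])
  · by_contra hlt
    push_neg at hlt
    have hnn := st12_toL_order_nonneg hx
    have hc := HahnSeries.coeff_order_eq_zero.not.mpr hne
    have hc' : (toL x).coeff (((toL x).order.toNat : ℕ) : ℤ) ≠ 0 := by
      rwa [Int.toNat_of_nonneg hnn]
    rw [st12_toL_coeff] at hc'
    exact hc' (h2 _ (by omega))

lemma st12_logderiv {k : Type} [Field k] (D : Derivation k (PowerSeries k) (PowerSeries k))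
    {ι : Type} (s : Finset ι) (u : ι → PowerSeries k) (hu : ∀ i ∈ s, u i ≠ 0) :
    (∑ i ∈ s, toL (D (u i)) * (toL (u i))⁻¹) * toL (∏ i ∈ s, u i)
      = toL (D (∏ i ∈ s, u i)) := by
  classical
  induction s using Finset.induction_on with
  | empty => simp [toL]
  | insert a t ha ih =>
    rw [Finset.sum_insert ha, Finset.prod_insert ha, toL_mul, Derivation.leibniz,
      toL_add, smul_eq_mul, smul_eq_mul, toL_mul, toL_mul,
      ← ih (fun i hi => hu i (Finset.mem_insert_of_mem hi))]
    have hua : toL (u a) ≠ 0 := toL_ne_zero_s12 (hu a (Finset.mem_insert_self a t))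
    field_simp
    ring

/-- Let `N ⊴ G` and let `c : G → Der` satisfy `c_{gs} = c_g + g·c_s`
for `g ∈ G`, `s ∈ N`.  Set `α = −y_N·(y_G'/y_N')·Σ_{s∈N} c_s(f_s)/f_s`.  Then
(i) `ρ(g)(α) − α = c_g(y_G) − ρ(g)(y_N)·(y_G'/y_N')·(y_N'/(ρ(g)(y_N))')·Σ_{s∈N}
c_{gs}(f_{gs})/f_{gs} + y_N·(y_G'/y_N')·Σ_{s∈N} c_s(f_s)/f_s`, in particular
`ρ(s)(α) − α = c_s(y_G)` for `s ∈ N`; (ii) `ord(α) ≥ ord(y_G') − ord(y_N')`, i.e.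
`α ∈ (y_G'/y_N')·k[[t]]`. -/
theorem statement12
    (p : ℕ) [Fact p.Prime]
    (k : Type) [Field k] [CharP k p] [PerfectField k]
    (G : Type) [Group G] [Fintype G]
    (ρ : G →* (PowerSeries k ≃ₐ[k] PowerSeries k)) (hρ : Function.Injective ρ)
    (ρL : G →* (LaurentSeries k ≃ₐ[k] LaurentSeries k))
    (hρL : ∀ g x, ρL g (toL x) = toL (ρ g x))
    (N : Subgroup G) (hN : N.Normal) [DecidablePred (· ∈ N)]
    (yN yG : PowerSeries k)
    (hyN : yN = ∏ s ∈ Finset.univ.filter (· ∈ N), ρ s PowerSeries.X)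
    (hyG : yG = ∏ g : G, ρ g PowerSeries.X)
    (dG dN : ℕ)
    (hdG : (PowerSeries.derivative k yG).order = (dG : ℕ∞))
    (hdN : (PowerSeries.derivative k yN).order = (dN : ℕ∞))
    (c : G → Derivation k (PowerSeries k) (PowerSeries k))
    (hc : ∀ g : G, ∀ s ∈ N, ∀ x, c (g * s) x = c g x + ρ g (c s (ρ g⁻¹ x)))
    (α : LaurentSeries k)
    (hα : α = -(toL yN *
      (toL (PowerSeries.derivative k yG) * (toL (PowerSeries.derivative k yN))⁻¹) *
      ∑ s ∈ Finset.univ.filter (· ∈ N),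
        toL (c s (ρ s PowerSeries.X)) * (toL (ρ s PowerSeries.X))⁻¹)) :
    -- (i)
    (∀ g : G, ρL g α - α =
      toL (c g yG) -
        toL (ρ g yN) *
          (toL (PowerSeries.derivative k yG) * (toL (PowerSeries.derivative k yN))⁻¹) *
          (toL (PowerSeries.derivative k yN) *
            (toL (PowerSeries.derivative k (ρ g yN)))⁻¹) *
          ∑ s ∈ Finset.univ.filter (· ∈ N),
            toL (c (g * s) (ρ (g * s) PowerSeries.X)) * (toL (ρ (g * s) PowerSeries.X))⁻¹ +
        toL yN *
          (toL (PowerSeries.derivative k yG) * (toL (PowerSeries.derivative k yN))⁻¹) *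
          ∑ s ∈ Finset.univ.filter (· ∈ N),
            toL (c s (ρ s PowerSeries.X)) * (toL (ρ s PowerSeries.X))⁻¹) ∧
    (∀ s ∈ N, ρL s α - α = toL (c s yG)) ∧
    -- (ii)
    ordGE α ((dG : ℤ) - (dN : ℤ)) ∧
    (∃ h : PowerSeries k,
      α = toL (PowerSeries.derivative k yG) * (toL (PowerSeries.derivative k yN))⁻¹ *
        toL h) := by
  classical
  have hρX : ∀ a b : G, ρ a (ρ b PowerSeries.X) = ρ (a*b) PowerSeries.X := by
    intro a b
    rw [map_mul]
    rfl
  have hXne : ∀ h : G, (ρ h PowerSeries.X) ≠ 0 := by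
    intro h h0
    have := st12_coeff_one (ρ h)
    rw [h0] at this
    simp at this
  have hX'ne : ∀ h : G, PowerSeries.derivative k (ρ h PowerSeries.X) ≠ 0 := by
    intro h h0
    apply st12_coeff_one (ρ h)
    have := congrArg (PowerSeries.coeff 0) h0
    simpa [PowerSeries.coeff_derivative] using this
  have hyG'ne : PowerSeries.derivative k yG ≠ 0 := by
    intro h0
    rw [h0, PowerSeries.order_zero] at hdG
    simp at hdG
  have hyN'ne : PowerSeries.derivative k yN ≠ 0 := by
    intro h0
    rw [h0, PowerSeries.order_zero] at hdN
    simp at hdN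
  have hyNne : yN ≠ 0 := by
    rw [hyN]
    exact Finset.prod_ne_zero_iff.mpr (fun s _ => hXne s)
  have hρyG : ∀ g : G, ρ g yG = yG := by
    intro g
    rw [hyG, map_prod]
    rw [Finset.prod_congr rfl (fun h _ => hρX g h)]
    exact Fintype.prod_equiv (Equiv.mulLeft g) _ _ (fun x => rfl)
  have hρyNprod : ∀ g : G, ρ g yN
      = ∏ s ∈ Finset.univ.filter (· ∈ N), ρ (g*s) PowerSeries.X := by
    intro g
    rw [hyN, map_prod]
    exact Finset.prod_congr rfl (fun s _ => hρX g s)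
  have hchainG : ∀ g : G, PowerSeries.derivative k yG
      = PowerSeries.derivative k (ρ g PowerSeries.X) * ρ g (PowerSeries.derivative k yG) := by
    intro g
    have := st12_chain (ρ g) yG
    rwa [hρyG g] at this
  have hchainN : ∀ g : G, PowerSeries.derivative k (ρ g yN)
      = PowerSeries.derivative k (ρ g PowerSeries.X) * ρ g (PowerSeries.derivative k yN) := by
    intro g
    exact st12_chain (ρ g) yN
  have hρyN'ne : ∀ g : G, PowerSeries.derivative k (ρ g yN) ≠ 0 := by
    intro g
    rw [hchainN g]
    refine mul_ne_zero (hX'ne g) (fun h0 => hyN'ne ?_)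
    have := congrArg (ρ g).symm h0
    simpa using this
  have hcoc : ∀ g : G, ∀ s ∈ N, ρ g (c s (ρ s PowerSeries.X))
      = c (g*s) (ρ (g*s) PowerSeries.X) - c g (ρ (g*s) PowerSeries.X) := by
    intro g s hs
    have h1 := hc g s hs (ρ (g*s) PowerSeries.X)
    have h2 : ρ g⁻¹ (ρ (g*s) PowerSeries.X) = ρ s PowerSeries.X := by
      rw [hρX g⁻¹ (g*s)]
      congr 1
      group
    rw [h2] at h1
    rw [h1]
    ring
  have hT : ∀ g : G, (∑ s ∈ Finset.univ.filter (· ∈ N),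
        toL (c g (ρ (g*s) PowerSeries.X)) * (toL (ρ (g*s) PowerSeries.X))⁻¹) * toL (ρ g yN)
      = toL (c g (ρ g yN)) := by
    intro g
    rw [hρyNprod g]
    exact st12_logderiv (c g) _ (fun s => ρ (g*s) PowerSeries.X) (fun s _ => hXne (g*s))
  have hcyG : ∀ g : G, toL (c g yG)
      = toL (PowerSeries.derivative k yG) * toL (c g PowerSeries.X) := by
    intro g
    rw [← toL_mul, ← st12_derivation_eq (c g) yG]
  have hcyNg : ∀ g : G, toL (c g (ρ g yN))
      = toL (PowerSeries.derivative k (ρ g yN)) * toL (c g PowerSeries.X) := by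
    intro g
    rw [← toL_mul, ← st12_derivation_eq (c g) (ρ g yN)]
  -- main computation
  have hmain : ∀ g : G, ρL g α =
      toL (c g yG) - toL (ρ g yN) *
        (toL (PowerSeries.derivative k yG) * (toL (PowerSeries.derivative k (ρ g yN)))⁻¹) *
        ∑ s ∈ Finset.univ.filter (· ∈ N),
          toL (c (g * s) (ρ (g * s) PowerSeries.X)) * (toL (ρ (g * s) PowerSeries.X))⁻¹ := by
    intro g
    have hL : ρL g α = -(toL (ρ g yN) *
        (toL (ρ g (PowerSeries.derivative k yG)) * (toL (ρ g (PowerSeries.derivative k yN)))⁻¹) *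
        ∑ s ∈ Finset.univ.filter (· ∈ N),
          toL (ρ g (c s (ρ s PowerSeries.X))) * (toL (ρ g (ρ s PowerSeries.X)))⁻¹) := by
      rw [hα]
      simp only [map_neg, map_mul, map_sum, map_inv₀, hρL]
    rw [hL]
    have hsum : (∑ s ∈ Finset.univ.filter (· ∈ N),
          toL (ρ g (c s (ρ s PowerSeries.X))) * (toL (ρ g (ρ s PowerSeries.X)))⁻¹)
        = (∑ s ∈ Finset.univ.filter (· ∈ N),
            toL (c (g*s) (ρ (g*s) PowerSeries.X)) * (toL (ρ (g*s) PowerSeries.X))⁻¹)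
          - ∑ s ∈ Finset.univ.filter (· ∈ N),
            toL (c g (ρ (g*s) PowerSeries.X)) * (toL (ρ (g*s) PowerSeries.X))⁻¹ := by
      rw [← Finset.sum_sub_distrib]
      refine Finset.sum_congr rfl (fun s hs => ?_)
      have hsN : s ∈ N := (Finset.mem_filter.mp hs).2
      rw [hρX g s, hcoc g s hsN, toL_sub, sub_mul]
    rw [hsum]
    have h1 : toL (PowerSeries.derivative k yG)
        = toL (PowerSeries.derivative k (ρ g PowerSeries.X)) * toL (ρ g (PowerSeries.derivative k yG)) := by
      rw [← toL_mul, ← hchainG g]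
    have h2 : toL (PowerSeries.derivative k (ρ g yN))
        = toL (PowerSeries.derivative k (ρ g PowerSeries.X)) * toL (ρ g (PowerSeries.derivative k yN)) := by
      rw [← toL_mul, ← hchainN g]
    have h3 := hT g
    rw [hcyNg g, h2] at h3
    rw [hcyG g, h1, h2]
    have hWne : toL (PowerSeries.derivative k (ρ g PowerSeries.X)) ≠ 0 := toL_ne_zero_s12 (hX'ne g)
    have hCρne : toL (ρ g (PowerSeries.derivative k yN)) ≠ 0 := by
      refine toL_ne_zero_s12 (fun h0 => hyN'ne ?_)
      have := congrArg (ρ g).symm h0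
      simpa using this
    have hinvW : toL (PowerSeries.derivative k (ρ g PowerSeries.X)) *
        (toL (PowerSeries.derivative k (ρ g PowerSeries.X)))⁻¹ = 1 := mul_inv_cancel₀ hWne
    have hinvC : toL (ρ g (PowerSeries.derivative k yN)) *
        (toL (ρ g (PowerSeries.derivative k yN)))⁻¹ = 1 := mul_inv_cancel₀ hCρne
    linear_combination (toL (ρ g (PowerSeries.derivative k yG)) *
        (toL (ρ g (PowerSeries.derivative k yN)))⁻¹) * h3
      + (toL (PowerSeries.derivative k (ρ g PowerSeries.X)) *
          toL (ρ g (PowerSeries.derivative k yG)) * toL (c g PowerSeries.X)) * hinvC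
      + (toL (ρ g yN) * toL (ρ g (PowerSeries.derivative k yG)) *
          (toL (ρ g (PowerSeries.derivative k yN)))⁻¹ *
          ∑ s ∈ Finset.univ.filter (· ∈ N),
            toL (c (g * s) (ρ (g * s) PowerSeries.X)) * (toL (ρ (g * s) PowerSeries.X))⁻¹) * hinvW
  have hA'Lne : toL (PowerSeries.derivative k yN) ≠ 0 := toL_ne_zero_s12 hyN'ne
  have part1 : ∀ g : G, ρL g α - α =
      toL (c g yG) -
        toL (ρ g yN) *
          (toL (PowerSeries.derivative k yG) * (toL (PowerSeries.derivative k yN))⁻¹) *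
          (toL (PowerSeries.derivative k yN) *
            (toL (PowerSeries.derivative k (ρ g yN)))⁻¹) *
          ∑ s ∈ Finset.univ.filter (· ∈ N),
            toL (c (g * s) (ρ (g * s) PowerSeries.X)) * (toL (ρ (g * s) PowerSeries.X))⁻¹ +
        toL yN *
          (toL (PowerSeries.derivative k yG) * (toL (PowerSeries.derivative k yN))⁻¹) *
          ∑ s ∈ Finset.univ.filter (· ∈ N),
            toL (c s (ρ s PowerSeries.X)) * (toL (ρ s PowerSeries.X))⁻¹ := by
    intro g
    rw [hmain g, hα]
    have hinv2 : (toL (PowerSeries.derivative k yN))⁻¹ * toL (PowerSeries.derivative k yN) = 1 :=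
      inv_mul_cancel₀ hA'Lne
    linear_combination (toL (ρ g yN) * toL (PowerSeries.derivative k yG) *
      (toL (PowerSeries.derivative k (ρ g yN)))⁻¹ *
      ∑ s ∈ Finset.univ.filter (· ∈ N),
        toL (c (g * s) (ρ (g * s) PowerSeries.X)) * (toL (ρ (g * s) PowerSeries.X))⁻¹) * hinv2
  have part2 : ∀ s ∈ N, ρL s α - α = toL (c s yG) := by
    intro s hs
    rw [part1 s]
    have h1 : ρ s yN = yN := by
      rw [hρyNprod s, hyN]
      refine Finset.prod_equiv (Equiv.mulLeft s) (fun i => ?_) (fun i _ => rfl)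
      simp only [Finset.mem_filter, Finset.mem_univ, true_and, Equiv.coe_mulLeft]
      exact (N.mul_mem_cancel_left hs).symm
    have h2 : (∑ s' ∈ Finset.univ.filter (· ∈ N),
          toL (c (s * s') (ρ (s * s') PowerSeries.X)) * (toL (ρ (s * s') PowerSeries.X))⁻¹)
        = ∑ s' ∈ Finset.univ.filter (· ∈ N),
          toL (c s' (ρ s' PowerSeries.X)) * (toL (ρ s' PowerSeries.X))⁻¹ := by
      refine Finset.sum_equiv (Equiv.mulLeft s) (fun i => ?_) (fun i _ => rfl)
      simp only [Finset.mem_filter, Finset.mem_univ, true_and, Equiv.coe_mulLeft]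
      exact (N.mul_mem_cancel_left hs).symm
    rw [h1, h2, mul_inv_cancel₀ hA'Lne]
    ring
  have hAS : toL yN * (∑ s ∈ Finset.univ.filter (· ∈ N),
        toL (c s (ρ s PowerSeries.X)) * (toL (ρ s PowerSeries.X))⁻¹)
      = toL (∑ s ∈ Finset.univ.filter (· ∈ N),
          (∏ t ∈ (Finset.univ.filter (· ∈ N)).erase s, ρ t PowerSeries.X) * c s (ρ s PowerSeries.X)) := by
    rw [toL_sum, Finset.mul_sum]
    refine Finset.sum_congr rfl (fun s hs => ?_)
    rw [toL_mul]
    have hsplit : yN = ρ s PowerSeries.X *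
        ∏ t ∈ (Finset.univ.filter (· ∈ N)).erase s, ρ t PowerSeries.X := by
      rw [hyN]
      exact (Finset.mul_prod_erase _ (fun x => ρ x PowerSeries.X) hs).symm
    rw [hsplit, toL_mul]
    have hus : toL (ρ s PowerSeries.X) ≠ 0 := toL_ne_zero_s12 (hXne s)
    have hinv3 : toL (ρ s PowerSeries.X) * (toL (ρ s PowerSeries.X))⁻¹ = 1 :=
      mul_inv_cancel₀ hus
    linear_combination (toL (∏ t ∈ (Finset.univ.filter (· ∈ N)).erase s, ρ t PowerSeries.X) *
      toL (c s (ρ s PowerSeries.X))) * hinv3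
  have hexist : α = toL (PowerSeries.derivative k yG) * (toL (PowerSeries.derivative k yN))⁻¹ *
      toL (-(∑ s ∈ Finset.univ.filter (· ∈ N),
        (∏ t ∈ (Finset.univ.filter (· ∈ N)).erase s, ρ t PowerSeries.X) * c s (ρ s PowerSeries.X))) := by
    rw [hα, toL_neg, ← hAS]
    ring
  refine ⟨part1, part2, ?_, ⟨_, hexist⟩⟩
  by_cases h0 : α = 0
  · exact Or.inl h0
  right
  have hHne : toL (-(∑ s ∈ Finset.univ.filter (· ∈ N),
      (∏ t ∈ (Finset.univ.filter (· ∈ N)).erase s, ρ t PowerSeries.X) * c s (ρ s PowerSeries.X))) ≠ 0 := by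
    intro hz
    apply h0
    rw [hexist, hz, mul_zero]
  have hhne : (-(∑ s ∈ Finset.univ.filter (· ∈ N),
      (∏ t ∈ (Finset.univ.filter (· ∈ N)).erase s, ρ t PowerSeries.X) * c s (ρ s PowerSeries.X)))
      ≠ (0 : PowerSeries k) := by
    intro e
    exact hHne (by rw [e, toL_zero])
  have hordB : (toL (PowerSeries.derivative k yG)).order = (dG : ℤ) := st12_toL_order hdG
  have hordA : (toL (PowerSeries.derivative k yN)).order = (dN : ℤ) := st12_toL_order hdN
  have hB'Lne : toL (PowerSeries.derivative k yG) ≠ 0 := toL_ne_zero_s12 hyG'ne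
  have heq : α * toL (PowerSeries.derivative k yN)
      = toL (PowerSeries.derivative k yG) * toL (-(∑ s ∈ Finset.univ.filter (· ∈ N),
        (∏ t ∈ (Finset.univ.filter (· ∈ N)).erase s, ρ t PowerSeries.X) * c s (ρ s PowerSeries.X))) := by
    rw [hexist]
    have hinv4 : (toL (PowerSeries.derivative k yN))⁻¹ * toL (PowerSeries.derivative k yN) = 1 :=
      inv_mul_cancel₀ hA'Lne
    linear_combination (toL (PowerSeries.derivative k yG) *
      toL (-(∑ s ∈ Finset.univ.filter (· ∈ N),
        (∏ t ∈ (Finset.univ.filter (· ∈ N)).erase s, ρ t PowerSeries.X) * c s (ρ s PowerSeries.X)))) * hinv4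
  have horder1 := HahnSeries.order_mul h0 hA'Lne
  have horder2 := HahnSeries.order_mul hB'Lne hHne
  rw [heq] at horder1
  rw [horder1, hordA, hordB] at horder2
  have hnn := st12_toL_order_nonneg hhne
  omega
end
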